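/- arXiv:2503.23349 — 8 statements merged into one kernel-verified Lean document; each statement's English description precedes it below -/
import Mathlib

section
/- For every real number r ≥ 0, there exists a Dirichlet series f(s) = ∑_{n=1}^∞ a_n n^{-s} with a_n > 0 for all n ≥ 1 such that σ_a(f) − δ_a(f) = r. -/
open scoped BigOperators Classical

noncomputable section

/-- Greatest prime factor of `n`, with the convention `gpf 1 = 1`. -/
def gpf (n : ℕ) : ℕ := if n = 1 then 1 else n.primeFactors.sup id

/-- `nthPrime n` is the `(n+1)`-st prime number `p_{n+1}`, so `nthPrime 0 = 2`. -/
def nthPrime (n : ℕ) : ℕ := Nat.nth Nat.Prime n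

/-- The coefficient sequence `a` restricted to `p`-smooth indices
(indices whose greatest prime factor is at most `p`). -/
def smoothCoeff (p : ℕ) (a : ℕ → ℝ) : ℕ → ℝ := fun j => if gpf j ≤ p then a j else 0

/-- Abscissa of absolute convergence of the Dirichlet series `∑_{n ≥ 1} a n * n ^ (-s)`,
as an extended real number. -/
def sigmaA (a : ℕ → ℝ) : EReal :=
  sInf {x : EReal | ∃ σ : ℝ, x = (σ : EReal) ∧
    Summable fun n : ℕ => a (n + 1) * ((n + 1 : ℕ) : ℝ) ^ (-σ)}

/-- The abscissa `δ_a` of the Dirichlet series `∑_{n ≥ 1} a n * n ^ (-s)`: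
the infimum of those `σ` for which every subseries supported on `p_n`-smooth
indices converges (absolutely). -/
def deltaA (a : ℕ → ℝ) : EReal :=
  sInf {x : EReal | ∃ σ : ℝ, x = (σ : EReal) ∧ ∀ n : ℕ,
    Summable fun j : ℕ => smoothCoeff (nthPrime n) a (j + 1) * ((j + 1 : ℕ) : ℝ) ^ (-σ)}

/-! ### Auxiliary material -/

/-- The example coefficient sequence: `j^(r-1)` at primes, `1` at powers of two,
and a rapidly decaying positive value elsewhere. -/
def exCoeff (r : ℝ) : ℕ → ℝ := fun j =>
  if Nat.Prime j then (j : ℝ) ^ (r - 1)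
  else if ∃ k : ℕ, j = 2 ^ k then 1
  else Real.exp (-(j : ℝ))

lemma exCoeff_pos (r : ℝ) (j : ℕ) : 0 < exCoeff r j := by
  unfold exCoeff
  split_ifs with h1 h2
  · exact Real.rpow_pos_of_pos (by exact_mod_cast h1.pos) _
  · norm_num
  · exact Real.exp_pos _

lemma gpf_prime {p : ℕ} (hp : Nat.Prime p) : gpf p = p := by
  unfold gpf
  rw [if_neg hp.one_lt.ne', hp.primeFactors, Finset.sup_singleton, id]

lemma gpf_two_pow {k : ℕ} (hk : k ≠ 0) : gpf (2 ^ k) = 2 := by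
  unfold gpf
  rw [if_neg (by
    intro h
    exact absurd h (Nat.one_lt_two_pow_iff.mpr hk).ne'),
    Nat.primeFactors_prime_pow hk Nat.prime_two, Finset.sup_singleton, id]

lemma two_pow_not_prime {k : ℕ} (hk : 2 ≤ k) : ¬ Nat.Prime (2 ^ k) := by
  intro hp
  rcases hp.eq_one_or_self_of_dvd 2 ⟨2 ^ (k - 1), by
    rw [← pow_succ']
    congr 1
    omega⟩ with h | h
  · norm_num at h
  · have : 2 ^ 2 ≤ 2 ^ k := Nat.pow_le_pow_right (by norm_num) hk
    omega

lemma summable_pow2_part {σ : ℝ} (h : 0 < σ) : Summable (fun j : ℕ =>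
    if ∃ k : ℕ, j = 2 ^ k then (j : ℝ) ^ (-σ) else 0) := by
  have hinj : Function.Injective (fun k : ℕ => 2 ^ k) :=
    fun a b hab => Nat.pow_right_injective le_rfl hab
  rw [← Function.Injective.summable_iff hinj]
  · have h1 : ((fun j : ℕ => if ∃ k : ℕ, j = 2 ^ k then (j : ℝ) ^ (-σ) else 0) ∘
        (fun k : ℕ => 2 ^ k)) = fun k : ℕ => ((2:ℝ) ^ (-σ)) ^ k := by
      funext k
      simp only [Function.comp]
      rw [if_pos ⟨k, rfl⟩]
      push_cast
      rw [← Real.rpow_natCast ((2:ℝ)) k, ← Real.rpow_mul (by norm_num),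
        ← Real.rpow_natCast ((2:ℝ) ^ (-σ)) k, ← Real.rpow_mul (by norm_num)]
      ring_nf
    rw [h1]
    exact summable_geometric_of_lt_one (Real.rpow_nonneg (by norm_num) _)
      (Real.rpow_lt_one_of_one_lt_of_neg (by norm_num) (by linarith))
  · rintro j hj
    rw [if_neg]
    rintro ⟨k, rfl⟩
    exact hj ⟨k, rfl⟩

lemma summable_exp_part : Summable (fun j : ℕ => Real.exp (-((j:ℝ) + 1))) := by
  have : (fun j : ℕ => Real.exp (-((j:ℝ) + 1))) = fun j : ℕ => Real.exp (-1) ^ (j + 1) := by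
    funext j
    rw [← Real.exp_nat_mul]
    push_cast
    ring_nf
  rw [this]
  exact (summable_nat_add_iff 1).mpr <| summable_geometric_of_lt_one (Real.exp_nonneg _)
    (Real.exp_lt_one_iff.mpr (by norm_num))

set_option maxHeartbeats 1000000 in
/-- Characterization of convergence of the full series. -/
lemma summable_full_iff (r : ℝ) (hr : 0 ≤ r) (σ : ℝ) :
    (Summable fun n : ℕ => exCoeff r (n + 1) * ((n + 1 : ℕ) : ℝ) ^ (-σ)) ↔ r < σ := by
  constructor
  · intro hs
    by_contra hcon
    push_neg at hcon  -- σ ≤ r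
    have hs' : Summable fun n : ℕ => exCoeff r n * ((n : ℕ) : ℝ) ^ (-σ) :=
      (summable_nat_add_iff 1).mp hs
    refine not_summable_one_div_on_primes ?_
    refine hs'.of_nonneg_of_le (fun n => Set.indicator_nonneg (fun p _ => by positivity) n) ?_
    intro n
    by_cases hp : Nat.Prime n
    · rw [Set.indicator_of_mem (s := {p : ℕ | Nat.Prime p}) hp]
      have h1 : (1:ℝ) ≤ (n:ℝ) := by exact_mod_cast hp.one_lt.le
      have hpos : (0:ℝ) < (n:ℝ) := by linarith
      rw [one_div, ← Real.rpow_neg_one]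
      unfold exCoeff
      rw [if_pos hp, ← Real.rpow_add hpos]
      exact Real.rpow_le_rpow_of_exponent_le h1 (by linarith)
    · rw [Set.indicator_of_notMem (s := {p : ℕ | Nat.Prime p}) hp]
      exact mul_nonneg (exCoeff_pos r n).le (Real.rpow_nonneg (Nat.cast_nonneg n) _)
  · intro hσ
    have hσ0 : 0 < σ := lt_of_le_of_lt hr hσ
    have hB : Summable (fun n : ℕ => ((n + 1 : ℕ) : ℝ) ^ (r - 1 - σ) +
        ((if ∃ k : ℕ, n + 1 = 2 ^ k then ((n + 1 : ℕ) : ℝ) ^ (-σ) else 0) +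
          Real.exp (-((n:ℝ) + 1)))) := by
      refine Summable.add ?_ (Summable.add ?_ summable_exp_part)
      · exact (summable_nat_add_iff 1).mpr
          (Real.summable_nat_rpow.mpr (show r - 1 - σ < -1 by linarith))
      · exact (summable_nat_add_iff 1).mpr (summable_pow2_part hσ0)
    refine hB.of_nonneg_of_le (fun n => mul_nonneg (exCoeff_pos r (n+1)).le
      (Real.rpow_nonneg (Nat.cast_nonneg _) _)) ?_
    intro n
    have h1 : (1:ℝ) ≤ ((n + 1 : ℕ) : ℝ) := by
      exact_mod_cast Nat.one_le_iff_ne_zero.mpr (Nat.succ_ne_zero n)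
    have hpos : (0:ℝ) < ((n + 1 : ℕ) : ℝ) := by linarith
    have hcast : ((n + 1 : ℕ) : ℝ) = (n:ℝ) + 1 := by push_cast; ring
    have hexp : (0:ℝ) ≤ Real.exp (-((n:ℝ) + 1)) := Real.exp_nonneg _
    have hrpow : (0:ℝ) ≤ ((n + 1 : ℕ) : ℝ) ^ (r - 1 - σ) := Real.rpow_nonneg hpos.le _
    have hpow2 : (0:ℝ) ≤ (if ∃ k : ℕ, n + 1 = 2 ^ k then ((n + 1 : ℕ) : ℝ) ^ (-σ) else 0) := by
      split_ifs with h
      · exact Real.rpow_nonneg hpos.le _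
      · exact le_rfl
    by_cases hp : Nat.Prime (n + 1)
    · have hLHS : exCoeff r (n + 1) * ((n + 1 : ℕ) : ℝ) ^ (-σ)
          = ((n + 1 : ℕ) : ℝ) ^ (r - 1 - σ) := by
        unfold exCoeff
        rw [if_pos hp, ← Real.rpow_add hpos, show r - 1 + -σ = r - 1 - σ from by ring]
      rw [hLHS]
      linarith
    · by_cases h2 : ∃ k : ℕ, n + 1 = 2 ^ k
      · have hLHS : exCoeff r (n + 1) * ((n + 1 : ℕ) : ℝ) ^ (-σ)
            = ((n + 1 : ℕ) : ℝ) ^ (-σ) := by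
          unfold exCoeff
          rw [if_neg hp, if_pos h2, one_mul]
        rw [hLHS, if_pos h2]
        linarith
      · have hle1 : ((n + 1 : ℕ) : ℝ) ^ (-σ) ≤ 1 :=
          Real.rpow_le_one_of_one_le_of_nonpos h1 (by linarith)
        have hLHS : exCoeff r (n + 1) * ((n + 1 : ℕ) : ℝ) ^ (-σ)
            ≤ Real.exp (-((n:ℝ) + 1)) := by
          unfold exCoeff
          rw [hcast] at hle1 ⊢
          rw [if_neg hp, if_neg h2]
          exact mul_le_of_le_one_right (Real.exp_nonneg _) hle1
        linarith

set_option maxHeartbeats 1000000 in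
/-- Characterization of convergence of the smooth subseries. -/
lemma summable_smooth_iff (r : ℝ) (hr : 0 ≤ r) (m : ℕ) (σ : ℝ) :
    (Summable fun j : ℕ =>
      smoothCoeff (nthPrime m) (exCoeff r) (j + 1) * ((j + 1 : ℕ) : ℝ) ^ (-σ)) ↔ 0 < σ := by
  set p := nthPrime m with hp
  have hpp : Nat.Prime p := Nat.prime_nth_prime m
  constructor
  · intro hs
    by_contra hcon
    push_neg at hcon  -- σ ≤ 0
    have hs' : Summable fun j : ℕ => smoothCoeff p (exCoeff r) j * ((j : ℕ) : ℝ) ^ (-σ) :=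
      (summable_nat_add_iff 1).mp hs
    have htend := hs'.tendsto_atTop_zero
    have hcomp : Filter.Tendsto
        (fun k : ℕ => smoothCoeff p (exCoeff r) (2 ^ (k + 2)) * ((2 ^ (k + 2) : ℕ) : ℝ) ^ (-σ))
        Filter.atTop (nhds 0) := by
      refine htend.comp ?_
      exact (tendsto_pow_atTop_atTop_of_one_lt (by norm_num : (1:ℕ) < 2)).comp
        (Filter.tendsto_add_atTop_nat 2)
    have hge : ∀ k : ℕ, (1:ℝ) ≤
        smoothCoeff p (exCoeff r) (2 ^ (k + 2)) * ((2 ^ (k + 2) : ℕ) : ℝ) ^ (-σ) := by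
      intro k
      unfold smoothCoeff
      rw [if_pos (by rw [gpf_two_pow (Nat.succ_ne_zero _)]; exact hpp.two_le)]
      unfold exCoeff
      rw [if_neg (two_pow_not_prime (by omega)), if_pos ⟨k + 2, rfl⟩, one_mul]
      refine Real.one_le_rpow ?_ (by linarith)
      have : (1:ℕ) ≤ 2 ^ (k + 2) := Nat.one_le_two_pow
      exact_mod_cast this
    have := ge_of_tendsto' hcomp hge
    linarith
  · intro hσ0
    have hB : Summable (fun j : ℕ =>
        (if Nat.Prime (j + 1) ∧ j + 1 ≤ p then ((j + 1 : ℕ) : ℝ) ^ (r - 1 - σ) else 0) +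
        ((if ∃ k : ℕ, j + 1 = 2 ^ k then ((j + 1 : ℕ) : ℝ) ^ (-σ) else 0) +
          Real.exp (-((j:ℝ) + 1)))) := by
      refine Summable.add ?_ (Summable.add ?_ summable_exp_part)
      · refine summable_of_ne_finset_zero (s := Finset.range p) ?_
        intro j hj
        rw [Finset.mem_range, not_lt] at hj
        rw [if_neg]
        rintro ⟨-, hle⟩
        omega
      · exact (summable_nat_add_iff 1).mpr (summable_pow2_part hσ0)
    refine hB.of_nonneg_of_le (fun j => ?_) (fun j => ?_)
    · unfold smoothCoeff
      split_ifs
      · exact mul_nonneg (exCoeff_pos r (j+1)).le (Real.rpow_nonneg (Nat.cast_nonneg _) _)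
      · rw [zero_mul]
    · have h1 : (1:ℝ) ≤ ((j + 1 : ℕ) : ℝ) := by
        exact_mod_cast Nat.one_le_iff_ne_zero.mpr (Nat.succ_ne_zero j)
      have hpos : (0:ℝ) < ((j + 1 : ℕ) : ℝ) := by linarith
      have hcast : ((j + 1 : ℕ) : ℝ) = (j:ℝ) + 1 := by push_cast; ring
      have hexp : (0:ℝ) ≤ Real.exp (-((j:ℝ) + 1)) := Real.exp_nonneg _
      have hpow2 : (0:ℝ) ≤ if ∃ k : ℕ, j + 1 = 2 ^ k then ((j + 1 : ℕ) : ℝ) ^ (-σ) else 0 := by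
        split_ifs
        · exact Real.rpow_nonneg hpos.le _
        · exact le_rfl
      have hprimepart : (0:ℝ) ≤
          if Nat.Prime (j + 1) ∧ j + 1 ≤ p then ((j + 1 : ℕ) : ℝ) ^ (r - 1 - σ) else 0 := by
        split_ifs
        · exact Real.rpow_nonneg hpos.le _
        · exact le_rfl
      by_cases hg : gpf (j + 1) ≤ p
      · by_cases hprime : Nat.Prime (j + 1)
        · have hjle : j + 1 ≤ p := by
            have := gpf_prime hprime
            omega
          have hLHS : smoothCoeff p (exCoeff r) (j + 1) * ((j + 1 : ℕ) : ℝ) ^ (-σ)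
              = ((j + 1 : ℕ) : ℝ) ^ (r - 1 - σ) := by
            unfold smoothCoeff exCoeff
            rw [if_pos hg, if_pos hprime, ← Real.rpow_add hpos,
              show r - 1 + -σ = r - 1 - σ from by ring]
          rw [hLHS, if_pos ⟨hprime, hjle⟩]
          linarith
        · by_cases h2 : ∃ k : ℕ, j + 1 = 2 ^ k
          · have hLHS : smoothCoeff p (exCoeff r) (j + 1) * ((j + 1 : ℕ) : ℝ) ^ (-σ)
                = ((j + 1 : ℕ) : ℝ) ^ (-σ) := by
              unfold smoothCoeff exCoeff
              rw [if_pos hg, if_neg hprime, if_pos h2, one_mul]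
            rw [hLHS, if_pos h2]
            linarith
          · have hle1 : ((j + 1 : ℕ) : ℝ) ^ (-σ) ≤ 1 :=
              Real.rpow_le_one_of_one_le_of_nonpos h1 (by linarith)
            have hLHS : smoothCoeff p (exCoeff r) (j + 1) * ((j + 1 : ℕ) : ℝ) ^ (-σ)
                ≤ Real.exp (-((j:ℝ) + 1)) := by
              unfold smoothCoeff exCoeff
              rw [hcast] at hle1 ⊢
              rw [if_pos hg, if_neg hprime, if_neg h2]
              exact mul_le_of_le_one_right (Real.exp_nonneg _) hle1
            linarith
      · have hLHS : smoothCoeff p (exCoeff r) (j + 1) * ((j + 1 : ℕ) : ℝ) ^ (-σ) = 0 := by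
          unfold smoothCoeff
          rw [if_neg hg, zero_mul]
        rw [hLHS]
        linarith

lemma sInf_coe_setOf {c : ℝ} {P : ℝ → Prop} (h : ∀ σ : ℝ, P σ ↔ c < σ) :
    sInf {x : EReal | ∃ σ : ℝ, x = (σ : EReal) ∧ P σ} = (c : EReal) := by
  apply le_antisymm
  · by_contra hcon
    push_neg at hcon
    obtain ⟨x, hx1, hx2⟩ := EReal.lt_iff_exists_real_btwn.mp hcon
    have hmem : (x : EReal) ∈ {y : EReal | ∃ σ : ℝ, y = (σ : EReal) ∧ P σ} :=
      ⟨x, rfl, (h x).mpr (EReal.coe_lt_coe_iff.mp hx1)⟩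
    exact absurd (sInf_le hmem) (not_le.mpr hx2)
  · apply le_sInf
    rintro x ⟨σ, rfl, hσ⟩
    exact_mod_cast le_of_lt ((h σ).mp hσ)

/-- For every real `r ≥ 0` there is a Dirichlet series
`f(s) = ∑_{n ≥ 1} a n * n^{-s}` with positive coefficients, convergent in some right
half-plane, such that `σ_a(f) - δ_a(f) = r`. -/
theorem statement0 (r : ℝ) (hr : 0 ≤ r) :
    ∃ a : ℕ → ℝ, (∀ n : ℕ, 1 ≤ n → 0 < a n) ∧
      (∃ σ : ℝ, Summable fun n : ℕ => a (n + 1) * ((n + 1 : ℕ) : ℝ) ^ (-σ)) ∧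
      sigmaA a - deltaA a = (r : EReal) := by
  refine ⟨exCoeff r, fun n _ => exCoeff_pos r n, ⟨r + 1,
    (summable_full_iff r hr (r + 1)).mpr (by linarith)⟩, ?_⟩
  have hsig : sigmaA (exCoeff r) = (r : EReal) :=
    sInf_coe_setOf (fun σ => summable_full_iff r hr σ)
  have hdel : deltaA (exCoeff r) = ((0 : ℝ) : EReal) := by
    refine sInf_coe_setOf (fun σ => ?_)
    constructor
    · intro h
      exact (summable_smooth_iff r hr 0 σ).mp (h 0)
    · intro h n
      exact (summable_smooth_iff r hr n σ).mpr h
  rw [hsig, hdel]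
  norm_num
end
end

section
/- For every real number r ≥ 1, there exists a Dirichlet series f(s) = ∑_{n=1}^∞ a_n n^{-s} with positive multiplicative coefficients (i.e., a_{mn} = a_m a_n whenever gcd(m,n) = 1) such that σ_a(f) − δ_a(f) = r. -/
open scoped BigOperators Classical

noncomputable section

/-! ### Auxiliary material for the proof -/

namespace Statement1Aux

/-- The coefficient sequence: `myA r n = rad(n) ^ (r - 1)`, where `rad n` is the radical
(product of distinct prime factors) of `n`. -/
def myA (r : ℝ) (n : ℕ) : ℝ := ((∏ p ∈ n.primeFactors, p : ℕ) : ℝ) ^ (r - 1)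

lemma rad_pos (n : ℕ) : 0 < ∏ p ∈ n.primeFactors, p :=
  Finset.prod_pos fun p hp => (Nat.prime_of_mem_primeFactors hp).pos

lemma myA_pos (r : ℝ) (n : ℕ) : 0 < myA r n :=
  Real.rpow_pos_of_pos (by exact_mod_cast rad_pos n) _

lemma myA_one (r : ℝ) : myA r 1 = 1 := by
  simp [myA]

lemma myA_mul (r : ℝ) {m n : ℕ} (h : Nat.Coprime m n) :
    myA r (m * n) = myA r m * myA r n := by
  unfold myA
  rw [h.primeFactors_mul, Finset.prod_union h.disjoint_primeFactors, Nat.cast_mul,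
    Real.mul_rpow (by positivity) (by positivity)]

lemma myA_prime (r : ℝ) {p : ℕ} (hp : p.Prime) : myA r p = (p : ℝ) ^ (r - 1) := by
  rw [myA, hp.primeFactors, Finset.prod_singleton]

lemma myA_prime_pow (r : ℝ) {p : ℕ} (hp : p.Prime) {k : ℕ} (hk : k ≠ 0) :
    myA r (p ^ k) = (p : ℝ) ^ (r - 1) := by
  rw [myA, Nat.primeFactors_pow _ hk, hp.primeFactors, Finset.prod_singleton]

lemma myA_le (r : ℝ) (hr : 1 ≤ r) {n : ℕ} (hn : n ≠ 0) : myA r n ≤ (n : ℝ) ^ (r - 1) := by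
  refine Real.rpow_le_rpow (by positivity) ?_ (by linarith)
  exact_mod_cast Nat.le_of_dvd (Nat.pos_of_ne_zero hn) (Nat.prod_primeFactors_dvd n)

lemma le_gpf {n q : ℕ} (hq : q ∈ n.primeFactors) : q ≤ gpf n := by
  unfold gpf
  split_ifs with h
  · subst h; simp at hq
  · exact Finset.le_sup (f := id) hq

lemma gpf_two_pow {k : ℕ} (hk : k ≠ 0) : gpf (2 ^ k) = 2 := by
  unfold gpf
  rw [if_neg (Nat.one_lt_two_pow_iff.mpr hk).ne', Nat.primeFactors_pow _ hk,
    Nat.Prime.primeFactors Nat.prime_two, Finset.sup_singleton]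
  rfl

lemma summable_succ_rpow {e : ℝ} (he : e < -1) :
    Summable fun n : ℕ => ((n + 1 : ℕ) : ℝ) ^ e := by
  have h := (Real.summable_nat_rpow (p := e)).mpr he
  have h2 := h.comp_injective (add_left_injective 1)
  have heq : (fun n : ℕ => ((n + 1 : ℕ) : ℝ) ^ e)
      = (fun n : ℕ => (n : ℝ) ^ e) ∘ (fun n : ℕ => n + 1) := rfl
  rw [heq]
  exact h2

/-- For `σ > r`, the full Dirichlet series converges. -/
lemma summable_myA (r σ : ℝ) (hr : 1 ≤ r) (hσ : r < σ) :
    Summable fun n : ℕ => myA r (n + 1) * ((n + 1 : ℕ) : ℝ) ^ (-σ) := by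
  have he : r - 1 + -σ < -1 := by linarith
  refine Summable.of_nonneg_of_le
    (fun n => mul_nonneg (myA_pos r _).le (Real.rpow_nonneg (by positivity) _))
    (fun n => ?_) (summable_succ_rpow he)
  have hpos : (0 : ℝ) < ((n + 1 : ℕ) : ℝ) := by positivity
  calc myA r (n + 1) * ((n + 1 : ℕ) : ℝ) ^ (-σ)
      ≤ ((n + 1 : ℕ) : ℝ) ^ (r - 1) * ((n + 1 : ℕ) : ℝ) ^ (-σ) :=
        mul_le_mul_of_nonneg_right (myA_le r hr (Nat.succ_ne_zero n))
          (Real.rpow_nonneg hpos.le _)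
    _ = ((n + 1 : ℕ) : ℝ) ^ (r - 1 + -σ) := (Real.rpow_add hpos _ _).symm

/-- For `σ ≤ r`, the full Dirichlet series diverges. -/
lemma not_summable_myA (r σ : ℝ) (hσ : σ ≤ r) :
    ¬ Summable fun n : ℕ => myA r (n + 1) * ((n + 1 : ℕ) : ℝ) ^ (-σ) := by
  intro h
  have h0 : Summable fun n : ℕ => (if n = 0 then (0 : ℝ) else myA r n * (n : ℝ) ^ (-σ)) := by
    refine (summable_nat_add_iff 1).mp ?_
    have heq : (fun n : ℕ => if n + 1 = 0 then (0 : ℝ)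
        else myA r (n + 1) * ((n + 1 : ℕ) : ℝ) ^ (-σ))
        = fun n : ℕ => myA r (n + 1) * ((n + 1 : ℕ) : ℝ) ^ (-σ) := by
      funext n; simp
    exact heq ▸ h
  refine not_summable_one_div_on_primes (Summable.of_nonneg_of_le ?_ ?_ h0)
  · intro n
    exact Set.indicator_nonneg (fun p _ => by positivity) n
  · intro n
    by_cases hn : n.Prime
    · rw [Set.indicator_of_mem (show n ∈ {p | Nat.Prime p} from hn)]
      have hne : n ≠ 0 := hn.pos.ne'
      have hpos : (0 : ℝ) < (n : ℝ) := by exact_mod_cast hn.pos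
      rw [if_neg hne, myA_prime r hn, ← Real.rpow_add hpos]
      have h1 : (1 : ℝ) ≤ (n : ℝ) := by exact_mod_cast hn.one_lt.le
      have h3 : (n : ℝ) ^ (-1 : ℝ) ≤ (n : ℝ) ^ (r - 1 + -σ) :=
        Real.rpow_le_rpow_of_exponent_le h1 (by linarith)
      calc (1 : ℝ) / n = (n : ℝ) ^ (-1 : ℝ) := by rw [Real.rpow_neg_one, one_div]
        _ ≤ (n : ℝ) ^ (r - 1 + -σ) := h3
    · rw [Set.indicator_of_notMem (show n ∉ {p | Nat.Prime p} from hn)]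
      split_ifs with h'
      · exact le_refl (0 : ℝ)
      · exact mul_nonneg (myA_pos r _).le (Real.rpow_nonneg (by positivity) _)

/-- For `σ > 0`, every smooth subseries converges. -/
lemma summable_smooth (r σ : ℝ) (hr : 1 ≤ r) (hσ : 0 < σ) (p : ℕ) :
    Summable fun j : ℕ => smoothCoeff p (myA r) (j + 1) * ((j + 1 : ℕ) : ℝ) ^ (-σ) := by
  set f : ℕ → ℝ := fun m => if m = 0 then 0 else myA r m * (m : ℝ) ^ (-σ) with hf
  have hf₁ : f 1 = 1 := by simp [hf, myA_one]
  have hmul : ∀ {m n : ℕ}, Nat.Coprime m n → f (m * n) = f m * f n := by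
    intro m n h
    rcases eq_or_ne m 0 with rfl | hm
    · have hn1 : n = 1 := by simpa using h
      subst hn1; simp [hf]
    rcases eq_or_ne n 0 with rfl | hn
    · have hm1 : m = 1 := by simpa using h
      subst hm1; simp [hf]
    · simp only [hf, if_neg hm, if_neg hn, if_neg (mul_ne_zero hm hn)]
      rw [myA_mul r h, Nat.cast_mul,
        Real.mul_rpow (by positivity) (by positivity)]
      ring
  have hsum : ∀ {q : ℕ}, q.Prime → Summable fun e : ℕ => ‖f (q ^ e)‖ := by
    intro q hq
    have hq1 : (1 : ℝ) < q := by exact_mod_cast hq.one_lt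
    have hq0 : (0 : ℝ) ≤ (q : ℝ) := by positivity
    have hlt : (q : ℝ) ^ (-σ) < 1 :=
      Real.rpow_lt_one_of_one_lt_of_neg hq1 (by linarith)
    have hge : (0 : ℝ) ≤ (q : ℝ) ^ (-σ) := Real.rpow_nonneg hq0 _
    refine Summable.of_nonneg_of_le (fun e => norm_nonneg _) (fun e => ?_)
      ((summable_geometric_of_lt_one hge hlt).mul_left ((q : ℝ) ^ (r - 1)))
    have hone : (1 : ℝ) ≤ (q : ℝ) ^ (r - 1) := Real.one_le_rpow hq1.le (by linarith)
    rcases Nat.eq_zero_or_pos e with rfl | he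
    · simpa [hf₁] using hone
    · have hqe : q ^ e ≠ 0 := pow_ne_zero e hq.pos.ne'
      have hcast : ((q ^ e : ℕ) : ℝ) = (q : ℝ) ^ (e : ℕ) := by push_cast; ring
      have hswap : ((q : ℝ) ^ (e : ℕ)) ^ (-σ) = ((q : ℝ) ^ (-σ)) ^ (e : ℕ) := by
        rw [← Real.rpow_natCast (q : ℝ) e, ← Real.rpow_natCast ((q : ℝ) ^ (-σ)) e,
          ← Real.rpow_mul hq0, ← Real.rpow_mul hq0, mul_comm]
      rw [hf]
      simp only [if_neg hqe]
      rw [myA_prime_pow r hq he.ne', hcast, hswap,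
        Real.norm_of_nonneg (mul_nonneg (Real.rpow_nonneg hq0 _)
          (pow_nonneg hge _))]
  obtain ⟨hs, -⟩ := EulerProduct.summable_and_hasSum_factoredNumbers_prod_filter_prime_tsum
    hf₁ hmul hsum (Finset.range (p + 1))
  have hind : Summable ((Nat.factoredNumbers (Finset.range (p + 1))).indicator
      fun m => ‖f m‖) := summable_subtype_iff_indicator.mp hs
  have hshift := (summable_nat_add_iff 1).mpr hind
  refine Summable.of_nonneg_of_le (fun j => ?_) (fun j => ?_) hshift
  · unfold smoothCoeff
    split_ifs with h'
    · exact mul_nonneg (myA_pos r _).le (Real.rpow_nonneg (by positivity) _)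
    · simp
  · by_cases h : gpf (j + 1) ≤ p
    · have hmem : (j + 1) ∈ Nat.factoredNumbers (Finset.range (p + 1)) := by
        rw [Nat.mem_factoredNumbers]
        exact ⟨Nat.succ_ne_zero j, fun q hq =>
          Finset.mem_range.mpr (lt_of_le_of_lt (le_trans (le_gpf (Nat.mem_primeFactors_iff_mem_primeFactorsList.mpr hq)) h) (Nat.lt_succ_self p))⟩
      rw [Set.indicator_of_mem hmem]
      have hsc : smoothCoeff p (myA r) (j + 1) = myA r (j + 1) := if_pos h
      rw [hsc, hf]
      simp only [if_neg (Nat.succ_ne_zero j)]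
      rw [Real.norm_of_nonneg (mul_nonneg (myA_pos r _).le
        (Real.rpow_nonneg (by positivity) _))]
    · have hsc : smoothCoeff p (myA r) (j + 1) = 0 := if_neg h
      rw [hsc, zero_mul]
      exact Set.indicator_nonneg (fun _ _ => norm_nonneg _) _

/-- For `σ ≤ 0`, the `2`-smooth subseries already diverges. -/
lemma not_summable_smooth (r σ : ℝ) (hr : 1 ≤ r) (hσ : σ ≤ 0) {p : ℕ} (hp : 2 ≤ p) :
    ¬ Summable fun j : ℕ => smoothCoeff p (myA r) (j + 1) * ((j + 1 : ℕ) : ℝ) ^ (-σ) := by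
  intro h
  have h1 : ∀ᶠ j : ℕ in Filter.atTop,
      smoothCoeff p (myA r) (j + 1) * ((j + 1 : ℕ) : ℝ) ^ (-σ) < 1 :=
    h.tendsto_atTop_zero.eventually_lt_const one_pos
  obtain ⟨N, hN⟩ := Filter.eventually_atTop.mp h1
  set j := 2 ^ (N + 1) - 1 with hj
  have h2p : 1 ≤ 2 ^ (N + 1) := Nat.one_le_two_pow
  have hj1 : j + 1 = 2 ^ (N + 1) := Nat.sub_add_cancel h2p
  have hjN : N ≤ j := by
    have := Nat.lt_two_pow_self (n := N + 1)
    omega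
  have hcontr := hN j hjN
  rw [hj1] at hcontr
  have hgpf : gpf (2 ^ (N + 1)) ≤ p := by
    rw [gpf_two_pow (Nat.succ_ne_zero N)]; exact hp
  have hsc : smoothCoeff p (myA r) (2 ^ (N + 1)) = myA r (2 ^ (N + 1)) := if_pos hgpf
  rw [hsc, myA_prime_pow r Nat.prime_two (Nat.succ_ne_zero N)] at hcontr
  have hA : (1 : ℝ) ≤ (2 : ℕ) ^ (r - 1) := Real.one_le_rpow (by norm_num) (by linarith)
  have hB : (1 : ℝ) ≤ ((2 ^ (N + 1) : ℕ) : ℝ) ^ (-σ) := by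
    refine Real.one_le_rpow ?_ (by linarith)
    exact_mod_cast h2p
  nlinarith

/-- Infimum of the coe-image of an open ray in `EReal`. -/
lemma sInf_image_Ioi (c : ℝ) :
    sInf ((fun x : ℝ => (x : EReal)) '' Set.Ioi c) = (c : EReal) := by
  apply le_antisymm
  · by_contra hlt
    push_neg at hlt
    obtain ⟨z, hz1, hz2⟩ := EReal.exists_between_coe_real hlt
    have hzmem : (z : EReal) ∈ (fun x : ℝ => (x : EReal)) '' Set.Ioi c :=
      ⟨z, by exact_mod_cast hz1, rfl⟩
    exact absurd (sInf_le hzmem) (not_le.mpr hz2)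
  · refine le_sInf ?_
    rintro x ⟨σ, hσ, rfl⟩
    show (c : EReal) ≤ (σ : EReal)
    exact_mod_cast le_of_lt hσ

lemma sigmaA_eq (r : ℝ) (hr : 1 ≤ r) : sigmaA (myA r) = (r : EReal) := by
  have hset : {x : EReal | ∃ σ : ℝ, x = (σ : EReal) ∧
      Summable fun n : ℕ => myA r (n + 1) * ((n + 1 : ℕ) : ℝ) ^ (-σ)}
      = (fun x : ℝ => (x : EReal)) '' Set.Ioi r := by
    ext x
    constructor
    · rintro ⟨σ, rfl, hs⟩
      refine ⟨σ, ?_, rfl⟩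
      by_contra hle
      exact not_summable_myA r σ (not_lt.mp (fun hc => hle hc)) hs
    · rintro ⟨σ, hσ, rfl⟩
      exact ⟨σ, rfl, summable_myA r σ hr hσ⟩
  rw [sigmaA, hset, sInf_image_Ioi]

lemma nthPrime_two_le (n : ℕ) : 2 ≤ nthPrime n :=
  (Nat.prime_nth_prime n).two_le

lemma deltaA_eq (r : ℝ) (hr : 1 ≤ r) : deltaA (myA r) = (0 : EReal) := by
  have hset : {x : EReal | ∃ σ : ℝ, x = (σ : EReal) ∧ ∀ n : ℕ,
      Summable fun j : ℕ => smoothCoeff (nthPrime n) (myA r) (j + 1) * ((j + 1 : ℕ) : ℝ) ^ (-σ)}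
      = (fun x : ℝ => (x : EReal)) '' Set.Ioi 0 := by
    ext x
    constructor
    · rintro ⟨σ, rfl, hs⟩
      refine ⟨σ, ?_, rfl⟩
      by_contra hle
      exact not_summable_smooth r σ hr (not_lt.mp (fun hc => hle hc))
        (nthPrime_two_le 0) (hs 0)
    · rintro ⟨σ, hσ, rfl⟩
      exact ⟨σ, rfl, fun n => summable_smooth r σ hr hσ (nthPrime n)⟩
  rw [deltaA, hset]
  have := sInf_image_Ioi 0
  rw [this]
  norm_num

end Statement1Aux

/-- For every real `r ≥ 1` there is a Dirichlet series with positive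
multiplicative coefficients (`a (m*n) = a m * a n` whenever `gcd m n = 1`), convergent
in some right half-plane, such that `σ_a(f) - δ_a(f) = r`. -/
theorem statement1 (r : ℝ) (hr : 1 ≤ r) :
    ∃ a : ℕ → ℝ, (∀ n : ℕ, 1 ≤ n → 0 < a n) ∧
      (∀ m n : ℕ, 1 ≤ m → 1 ≤ n → Nat.Coprime m n → a (m * n) = a m * a n) ∧
      (∃ σ : ℝ, Summable fun n : ℕ => a (n + 1) * ((n + 1 : ℕ) : ℝ) ^ (-σ)) ∧
      sigmaA a - deltaA a = (r : EReal) := by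
  refine ⟨Statement1Aux.myA r, fun n _ => Statement1Aux.myA_pos r n,
    fun m n _ _ h => Statement1Aux.myA_mul r h,
    ⟨r + 1, Statement1Aux.summable_myA r (r + 1) hr (by linarith)⟩, ?_⟩
  rw [Statement1Aux.sigmaA_eq r hr, Statement1Aux.deltaA_eq r hr]
  simp
end
end

section
/- For r ≥ 0 and f(s) = ζ(s − r + 1)(1 + ∑_{n=1}^∞ p_n^{r−1−s}/(1 − p_n^{-s})) = ∑_{m=1}^∞ c_m m^{-s}, the coefficient of f at any prime p satisfies c_p = 2 p^{r−1}, and the coefficient at any power of 2 satisfies c_{2^m} ≥ 2^{r−1} for all integers m ≥ 1. -/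
open scoped BigOperators Classical

noncomputable section

/-- Coefficients of `g(s) = ∑_n p_n^{r-1-s}/(1 - p_n^{-s})`. -/
def gCoeff (r : ℝ) : ℕ → ℝ := fun m => if IsPrimePow m then (m.minFac : ℝ) ^ (r - 1) else 0

/-- Coefficients of `1 + g(s)`. -/
def onePlusGCoeff (r : ℝ) : ℕ → ℝ := fun m => (if m = 1 then 1 else 0) + gCoeff r m

/-- Coefficients of `f(s) = ζ(s - r + 1) * (1 + g(s))`, obtained by multiplying out
(Dirichlet convolution of) `∑_{m ≥ 1} m^{r-1} m^{-s}` and `1 + g(s)`. -/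
def fCoeff (r : ℝ) : ℕ → ℝ :=
  fun m => ∑ d ∈ m.divisors, ((m / d : ℕ) : ℝ) ^ (r - 1) * onePlusGCoeff r d

/-- For `r ≥ 0` and `f(s) = ζ(s-r+1)(1+g(s)) = ∑_m c_m m^{-s}`,
the coefficient at any prime `p` is `c_p = 2 p^{r-1}`, and `c_{2^m} ≥ 2^{r-1}` for all
integers `m ≥ 1`. -/
theorem statement8 (r : ℝ) (hr : 0 ≤ r) :
    (∀ p : ℕ, p.Prime → fCoeff r p = 2 * (p : ℝ) ^ (r - 1)) ∧
    (∀ m : ℕ, 1 ≤ m → (2 : ℝ) ^ (r - 1) ≤ fCoeff r (2 ^ m)) := by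

  constructor
  · intro p hp
    have h1 : p ≠ 1 := hp.ne_one
    rw [fCoeff, Nat.Prime.divisors hp]
    rw [Finset.sum_insert (by simp; exact fun h => h1 h.symm)]
    simp only [Finset.sum_singleton, onePlusGCoeff, gCoeff, Nat.div_self hp.pos, Nat.div_one]
    rw [if_pos trivial, if_neg not_isPrimePow_one, if_neg h1, if_pos hp.isPrimePow, hp.minFac_eq]
    push_cast
    rw [Real.one_rpow]
    ring
  · intro m hm
    have h2 : (2:ℕ) ^ m ∈ ((2:ℕ) ^ m).divisors := by
      simp [Nat.mem_divisors]
    have hterm : ((((2:ℕ)^m / (2:ℕ)^m : ℕ)) : ℝ) ^ (r - 1) * onePlusGCoeff r (2 ^ m)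
        = (2:ℝ) ^ (r - 1) := by
      rw [Nat.div_self (by positivity)]
      simp only [onePlusGCoeff, gCoeff]
      have h1 : (2:ℕ)^m ≠ 1 := by
        have := Nat.one_lt_two_pow (n := m) (by omega)
        omega
      rw [if_neg h1, if_pos (by exact Nat.prime_two.isPrimePow.pow (by omega))]
      have : ((2:ℕ)^m).minFac = 2 := by
        rw [Nat.pow_minFac (by omega), (by norm_num : Nat.minFac 2 = 2)]
      rw [this]
      push_cast
      rw [Real.one_rpow]
      ring
    calc (2:ℝ) ^ (r-1) = _ := hterm.symm
      _ ≤ fCoeff r (2 ^ m) := by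
          apply Finset.single_le_sum (f := fun d => (((2:ℕ)^m / d : ℕ) : ℝ) ^ (r - 1) * onePlusGCoeff r d) _ h2
          intro i _
          apply mul_nonneg (Real.rpow_nonneg (by positivity) _)
          unfold onePlusGCoeff gCoeff
          apply add_nonneg
          · split <;> norm_num
          · split
            · exact Real.rpow_nonneg (by positivity) _
            · exact le_refl 0
end
end

section
/- Let g(s) = ∑_{n=2}^∞ b_n n^{-s} be a Dirichlet series with b_n > 0 for all n ≥ 2 and abscissa of absolute convergence σ_a(g) < ∞ (possibly −∞), let α > 0, and suppose there exists ρ ∈ (σ_a(g), ∞) with g(ρ) = α. Then f := 1/(α − g) is representable by a convergent Dirichlet series f(s) = ∑_{n=1}^∞ c_n n^{-s} in some right half-plane, and σ_a(f) = δ_a(f) = ρ. -/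
open scoped BigOperators Classical

noncomputable section

open scoped ENNReal NNReal LSeries.notation

lemma gpf_le_self {n : ℕ} (hn : n ≠ 0) : gpf n ≤ n := by
  unfold gpf
  split
  · omega
  · exact Finset.sup_le fun p hp => Nat.le_of_dvd (Nat.pos_of_ne_zero hn)
      (Nat.dvd_of_mem_primeFactors hp)

lemma gpf_one : gpf 1 = 1 := by simp [gpf]

lemma le_gpf_of_prime_dvd {q n : ℕ} (hq : q.Prime) (hd : q ∣ n) (hn : n ≠ 0) : q ≤ gpf n := by
  have hn1 : n ≠ 1 := by rintro rfl; exact hq.one_lt.ne' (Nat.dvd_one.mp hd)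
  unfold gpf
  rw [if_neg hn1]
  exact Finset.le_sup (f := id) (Nat.mem_primeFactors.mpr ⟨hq, hd, hn⟩)

lemma gpf_prime_dvd {n : ℕ} (hn : 2 ≤ n) : (gpf n).Prime ∧ gpf n ∣ n := by
  unfold gpf
  rw [if_neg (by omega)]
  obtain ⟨p, hp, hps⟩ := Finset.exists_mem_eq_sup n.primeFactors
    (Nat.nonempty_primeFactors.mpr hn) id
  rw [hps]
  exact ⟨Nat.prime_of_mem_primeFactors hp, Nat.dvd_of_mem_primeFactors hp⟩

lemma gpf_mono_dvd {d n : ℕ} (hd : d ∣ n) (hn : n ≠ 0) : gpf d ≤ gpf n := by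
  rcases eq_or_ne d 1 with rfl | hd1
  · rcases eq_or_ne n 1 with rfl | hn1
    · simp [gpf]
    · have h2 : 2 ≤ n := by
        rcases Nat.lt_or_ge n 2 with h | h
        · interval_cases n <;> simp_all
        · exact h
      calc gpf 1 = 1 := gpf_one
        _ ≤ gpf n := (gpf_prime_dvd h2).1.one_lt.le.trans' (by omega)
  · have hd0 : d ≠ 0 := by rintro rfl; exact hn (Nat.zero_dvd.mp hd)
    have hn1 : n ≠ 1 := by rintro rfl; exact hd1 (Nat.dvd_one.mp hd)
    unfold gpf
    rw [if_neg hd1, if_neg hn1]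
    exact Finset.sup_mono (Nat.primeFactors_mono hd hn)

noncomputable def cf (b : ℕ → ℝ) (α : ℝ) : ℕ → ℝ
  | n =>
    if n = 1 then α⁻¹
    else α⁻¹ * ∑ d ∈ n.properDivisors.attach, b (n / d.1) * cf b α d.1
decreasing_by exact (Nat.mem_properDivisors.mp d.2).2

variable {b : ℕ → ℝ} {α : ℝ}

lemma cf_zero : cf b α 0 = 0 := by
  rw [cf, if_neg (by norm_num), Nat.properDivisors_zero]
  simp

lemma cf_one : cf b α 1 = α⁻¹ := by rw [cf]; simp

lemma cf_of_two_le {n : ℕ} (hn : 2 ≤ n) :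
    cf b α n = α⁻¹ * ∑ d ∈ n.properDivisors, b (n / d) * cf b α d := by
  rw [cf, if_neg (by omega)]
  congr 1
  exact Finset.sum_attach _ (fun d => b (n / d) * cf b α d)

lemma two_le_div_of_properDivisor {d n : ℕ} (hd : d ∈ n.properDivisors) (hn : n ≠ 0) :
    2 ≤ n / d := by
  obtain ⟨hdvd, hlt⟩ := Nat.mem_properDivisors.mp hd
  have hk : d * (n / d) = n := Nat.mul_div_cancel' hdvd
  by_contra h
  push_neg at h
  have h' : n / d ≤ 1 := by omega
  rcases Nat.le_one_iff_eq_zero_or_eq_one.mp h' with h0 | h1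
  · rw [h0, mul_zero] at hk; omega
  · rw [h1, mul_one] at hk; omega

lemma cf_pos (hα : 0 < α) (hbpos : ∀ n : ℕ, 2 ≤ n → 0 < b n) :
    ∀ n : ℕ, n ≠ 0 → 0 < cf b α n := by
  intro n
  induction n using Nat.strong_induction_on with
  | _ n ih =>
    intro hn
    rcases eq_or_ne n 1 with rfl | hn1
    · rw [cf_one]; positivity
    · have h2 : 2 ≤ n := by omega
      rw [cf_of_two_le h2]
      have hpos : 0 < ∑ d ∈ n.properDivisors, b (n / d) * cf b α d := by
        apply Finset.sum_pos'
        · intro d hd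
          have hd0 : d ≠ 0 := (Nat.pos_of_mem_properDivisors hd).ne'
          exact le_of_lt (mul_pos (hbpos _ (two_le_div_of_properDivisor hd hn))
            (ih d (Nat.mem_properDivisors.mp hd).2 hd0))
        · refine ⟨1, Nat.one_mem_properDivisors_iff_one_lt.mpr (by omega), ?_⟩
          rw [Nat.div_one, cf_one]
          exact mul_pos (hbpos n h2) (by positivity)
      exact mul_pos (by positivity) hpos

lemma cf_nonneg (hα : 0 < α) (hbpos : ∀ n : ℕ, 2 ≤ n → 0 < b n) (n : ℕ) : 0 ≤ cf b α n := by
  rcases eq_or_ne n 0 with rfl | hn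
  · rw [cf_zero]
  · exact (cf_pos hα hbpos n hn).le

lemma cf_rec (hα : 0 < α) (hb1 : b 1 = 0) (n : ℕ) :
    α * cf b α n = (if n = 1 then 1 else 0) +
      ∑ p ∈ n.divisorsAntidiagonal, b p.1 * cf b α p.2 := by
  rw [Nat.sum_divisorsAntidiagonal' (f := fun x y => b x * cf b α y)]
  rcases eq_or_ne n 0 with rfl | hn0
  · simp [cf_zero]
  rcases eq_or_ne n 1 with rfl | hn1
  · simp [cf_one, hb1, Nat.divisors_one, hα.ne']
  · have h2 : 2 ≤ n := by omega
    rw [if_neg hn1, zero_add]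
    rw [← Nat.insert_self_properDivisors hn0]
    rw [Finset.sum_insert Nat.self_notMem_properDivisors]
    rw [Nat.div_self (Nat.pos_of_ne_zero hn0), hb1, zero_mul, zero_add]
    rw [cf_of_two_le h2]
    field_simp

def W (σ : ℝ) (n : ℕ) : ℝ≥0∞ := (n : ℝ≥0∞) ^ (-σ)

lemma W_one (σ : ℝ) : W σ 1 = 1 := by simp [W]

lemma W_mul (a c : ℕ) (σ : ℝ) : W σ (a * c) = W σ a * W σ c := by
  unfold W
  push_cast
  rw [ENNReal.mul_rpow_of_ne_top (by simp) (by simp)]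

lemma W_eq_ofReal {n : ℕ} (hn : n ≠ 0) (σ : ℝ) : W σ n = ENNReal.ofReal ((n : ℝ) ^ (-σ)) := by
  rw [W, ← ENNReal.ofReal_rpow_of_pos (by positivity), ENNReal.ofReal_natCast]

lemma Ekey (X Y : ℕ → ℝ≥0∞) (hX : X 0 = 0) (hY : Y 0 = 0) (σ : ℝ) :
    ∑' n : ℕ, (∑ p ∈ n.divisorsAntidiagonal, X p.1 * Y p.2) * W σ n
      = (∑' n : ℕ, X n * W σ n) * (∑' n : ℕ, Y n * W σ n) := by
  set F : ℕ × ℕ → ℝ≥0∞ := fun p => (X p.1 * W σ p.1) * (Y p.2 * W σ p.2) with hF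
  have hstep : ∀ n : ℕ, (∑ p ∈ n.divisorsAntidiagonal, X p.1 * Y p.2) * W σ n
      = ∑ p ∈ n.divisorsAntidiagonal, F p := by
    intro n
    rw [Finset.sum_mul]
    refine Finset.sum_congr rfl fun p hp => ?_
    obtain ⟨hmul, hn0⟩ := Nat.mem_divisorsAntidiagonal.mp hp
    rw [← hmul, W_mul]
    ring
  calc ∑' n : ℕ, (∑ p ∈ n.divisorsAntidiagonal, X p.1 * Y p.2) * W σ n
      = ∑' n : ℕ, ∑ p ∈ n.divisorsAntidiagonal, F p := tsum_congr hstep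
    _ = ∑' n : ℕ, ∑' p : ℕ × ℕ, (if p ∈ n.divisorsAntidiagonal then F p else 0) := by
        refine tsum_congr fun n => ?_
        rw [tsum_eq_sum (s := n.divisorsAntidiagonal) (fun p hp => if_neg hp)]
        exact Finset.sum_congr rfl fun p hp => (if_pos hp).symm
    _ = ∑' p : ℕ × ℕ, ∑' n : ℕ, (if p ∈ n.divisorsAntidiagonal then F p else 0) :=
        ENNReal.tsum_comm
    _ = ∑' p : ℕ × ℕ, F p := by
        refine tsum_congr fun p => ?_
        rcases eq_or_ne p.1 0 with h1 | h1
        · have hFp : F p = 0 := by simp [hF, h1, hX]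
          simp [hFp]
        rcases eq_or_ne p.2 0 with h2 | h2
        · have hFp : F p = 0 := by simp [hF, h2, hY]
          simp [hFp]
        · rw [tsum_eq_single (p.1 * p.2) ?_]
          · rw [if_pos (Nat.mem_divisorsAntidiagonal.mpr ⟨rfl, mul_ne_zero h1 h2⟩)]
          · intro n hn
            rw [if_neg]
            intro hmem
            exact hn ((Nat.mem_divisorsAntidiagonal.mp hmem).1.symm)
    _ = ∑' a : ℕ, (X a * W σ a) * ∑' c : ℕ, (Y c * W σ c) := by
        rw [show (∑' p : ℕ × ℕ, F p) = ∑' (a : ℕ) (c : ℕ), (X a * W σ a) * (Y c * W σ c) from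
          ENNReal.tsum_prod (f := fun a c => (X a * W σ a) * (Y c * W σ c))]
        exact tsum_congr fun a => ENNReal.tsum_mul_left
    _ = (∑' n : ℕ, X n * W σ n) * (∑' n : ℕ, Y n * W σ n) := ENNReal.tsum_mul_right
lemma cf_rec_smooth (hα : 0 < α) (hb1 : b 1 = 0) {P : ℕ} (hP : 1 ≤ P) (n : ℕ) :
    α * smoothCoeff P (cf b α) n = (if n = 1 then 1 else 0) +
      ∑ p ∈ n.divisorsAntidiagonal, smoothCoeff P b p.1 * smoothCoeff P (cf b α) p.2 := by
  rcases eq_or_ne n 0 with rfl | hn0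
  · simp [smoothCoeff, cf_zero, Nat.divisorsAntidiagonal_zero]
  by_cases hg : gpf n ≤ P
  · rw [show smoothCoeff P (cf b α) n = cf b α n from if_pos hg]
    rw [cf_rec hα hb1 n]
    congr 1
    refine Finset.sum_congr rfl fun p hp => ?_
    obtain ⟨hmul, -⟩ := Nat.mem_divisorsAntidiagonal.mp hp
    have h1 : p.1 ∣ n := Dvd.intro _ hmul
    have h2 : p.2 ∣ n := Dvd.intro_left _ hmul
    rw [show smoothCoeff P b p.1 = b p.1 from if_pos ((gpf_mono_dvd h1 hn0).trans hg),
        show smoothCoeff P (cf b α) p.2 = cf b α p.2 from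
          if_pos ((gpf_mono_dvd h2 hn0).trans hg)]
  · have hn1 : n ≠ 1 := by rintro rfl; exact hg (gpf_one ▸ hP)
    have h2n : 2 ≤ n := by omega
    obtain ⟨hqp, hqd⟩ := gpf_prime_dvd h2n
    rw [show smoothCoeff P (cf b α) n = 0 from if_neg hg, mul_zero, if_neg hn1, zero_add]
    symm
    apply Finset.sum_eq_zero
    intro p hp
    obtain ⟨hmul, -⟩ := Nat.mem_divisorsAntidiagonal.mp hp
    have h10 : p.1 ≠ 0 := by rintro h; rw [← hmul, h, zero_mul] at hn0; exact hn0 rfl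
    have h20 : p.2 ≠ 0 := by rintro h; rw [← hmul, h, mul_zero] at hn0; exact hn0 rfl
    push_neg at hg
    have hqd' : gpf n ∣ p.1 * p.2 := by rw [hmul]; exact hqd
    rcases (Nat.Prime.dvd_mul hqp).mp hqd' with hd | hd
    · rw [show smoothCoeff P b p.1 = 0 from if_neg ?_, zero_mul]
      intro hle
      exact absurd ((le_gpf_of_prime_dvd hqp hd h10).trans hle) (not_le.mpr hg)
    · rw [show smoothCoeff P (cf b α) p.2 = 0 from if_neg ?_, mul_zero]
      intro hle
      exact absurd ((le_gpf_of_prime_dvd hqp hd h20).trans hle) (not_le.mpr hg)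

def ZZ (x : ℕ → ℝ) : ℕ → ℝ≥0∞ := fun n => if n = 0 then 0 else ENNReal.ofReal (x n)

def sE (x : ℕ → ℝ) (σ : ℝ) : ℝ≥0∞ := ∑' n : ℕ, ZZ x n * W σ n

lemma ZZ_zero (x : ℕ → ℝ) : ZZ x 0 = 0 := if_pos rfl

lemma ZZ_of_ne {x : ℕ → ℝ} {n : ℕ} (hn : n ≠ 0) : ZZ x n = ENNReal.ofReal (x n) := if_neg hn

lemma sE_eq_shift (x : ℕ → ℝ) (hx : ∀ n, n ≠ 0 → 0 ≤ x n) (σ : ℝ) :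
    sE x σ = ∑' n : ℕ, ENNReal.ofReal (x (n + 1) * ((n + 1 : ℕ) : ℝ) ^ (-σ)) := by
  rw [sE, tsum_eq_zero_add' (f := fun n : ℕ => ZZ x n * W σ n) ENNReal.summable, ZZ_zero,
    zero_mul, zero_add]
  refine tsum_congr fun n => ?_
  rw [ZZ_of_ne (Nat.succ_ne_zero n), W_eq_ofReal (Nat.succ_ne_zero n),
    ← ENNReal.ofReal_mul (hx _ (Nat.succ_ne_zero n))]

lemma summable_iff_sE (x : ℕ → ℝ) (hx : ∀ n, n ≠ 0 → 0 ≤ x n) (σ : ℝ) :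
    (Summable fun n : ℕ => x (n + 1) * ((n + 1 : ℕ) : ℝ) ^ (-σ)) ↔ sE x σ ≠ ⊤ := by
  have hnn : ∀ n : ℕ, 0 ≤ x (n + 1) * ((n + 1 : ℕ) : ℝ) ^ (-σ) := fun n =>
    mul_nonneg (hx _ (Nat.succ_ne_zero n)) (Real.rpow_nonneg (by positivity) _)
  rw [sE_eq_shift x hx σ]
  constructor
  · intro h
    rw [← ENNReal.ofReal_tsum_of_nonneg hnn h]
    exact ENNReal.ofReal_ne_top
  · intro h
    have := ENNReal.summable_toReal h
    refine this.congr fun n => ?_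
    exact ENNReal.toReal_ofReal (hnn n)

lemma sE_eq_tsum (x : ℕ → ℝ) (hx : ∀ n, n ≠ 0 → 0 ≤ x n) (σ : ℝ)
    (h : Summable fun n : ℕ => x (n + 1) * ((n + 1 : ℕ) : ℝ) ^ (-σ)) :
    sE x σ = ENNReal.ofReal (∑' n : ℕ, x (n + 1) * ((n + 1 : ℕ) : ℝ) ^ (-σ)) := by
  have hnn : ∀ n : ℕ, 0 ≤ x (n + 1) * ((n + 1 : ℕ) : ℝ) ^ (-σ) := fun n =>
    mul_nonneg (hx _ (Nat.succ_ne_zero n)) (Real.rpow_nonneg (by positivity) _)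
  rw [sE_eq_shift x hx σ, ENNReal.ofReal_tsum_of_nonneg hnn h]

lemma identityE {α : ℝ} (hα : 0 < α) (u v : ℕ → ℝ)
    (hu : ∀ n, n ≠ 0 → 0 ≤ u n) (hv : ∀ n, n ≠ 0 → 0 ≤ v n)
    (hrec : ∀ n : ℕ, α * v n = (if n = 1 then 1 else 0) +
      ∑ p ∈ n.divisorsAntidiagonal, u p.1 * v p.2) (σ : ℝ) :
    ENNReal.ofReal α * sE v σ = 1 + sE u σ * sE v σ := by
  have hpt : ∀ n : ℕ, ENNReal.ofReal α * (ZZ v n * W σ n)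
      = ((if n = 1 then 1 else 0) : ℝ≥0∞) * W σ n
        + (∑ p ∈ n.divisorsAntidiagonal, ZZ u p.1 * ZZ v p.2) * W σ n := by
    intro n
    rcases eq_or_ne n 0 with rfl | hn0
    · simp [ZZ_zero, Nat.divisorsAntidiagonal_zero]
    · have hsum_nonneg : 0 ≤ ∑ p ∈ n.divisorsAntidiagonal, u p.1 * v p.2 := by
        refine Finset.sum_nonneg fun p hp => ?_
        obtain ⟨hmul, -⟩ := Nat.mem_divisorsAntidiagonal.mp hp
        have h10 : p.1 ≠ 0 := by rintro h; rw [← hmul, h, zero_mul] at hn0; exact hn0 rfl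
        have h20 : p.2 ≠ 0 := by rintro h; rw [← hmul, h, mul_zero] at hn0; exact hn0 rfl
        exact mul_nonneg (hu _ h10) (hv _ h20)
      rw [ZZ_of_ne hn0, ← mul_assoc, ← ENNReal.ofReal_mul hα.le, hrec n,
        ENNReal.ofReal_add (by split <;> norm_num) hsum_nonneg, add_mul]
      congr 2
      · split <;> simp
      · rw [ENNReal.ofReal_sum_of_nonneg]
        · refine Finset.sum_congr rfl fun p hp => ?_
          obtain ⟨hmul, -⟩ := Nat.mem_divisorsAntidiagonal.mp hp
          have h10 : p.1 ≠ 0 := by rintro h; rw [← hmul, h, zero_mul] at hn0; exact hn0 rfl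
          have h20 : p.2 ≠ 0 := by rintro h; rw [← hmul, h, mul_zero] at hn0; exact hn0 rfl
          rw [ENNReal.ofReal_mul (hu _ h10), ZZ_of_ne h10, ZZ_of_ne h20]
        · intro p hp
          obtain ⟨hmul, -⟩ := Nat.mem_divisorsAntidiagonal.mp hp
          have h10 : p.1 ≠ 0 := by rintro h; rw [← hmul, h, zero_mul] at hn0; exact hn0 rfl
          have h20 : p.2 ≠ 0 := by rintro h; rw [← hmul, h, mul_zero] at hn0; exact hn0 rfl
          exact mul_nonneg (hu _ h10) (hv _ h20)
  calc ENNReal.ofReal α * sE v σ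
      = ∑' n : ℕ, ENNReal.ofReal α * (ZZ v n * W σ n) := ENNReal.tsum_mul_left.symm
    _ = ∑' n : ℕ, (((if n = 1 then 1 else 0) : ℝ≥0∞) * W σ n
        + (∑ p ∈ n.divisorsAntidiagonal, ZZ u p.1 * ZZ v p.2) * W σ n) := tsum_congr hpt
    _ = (∑' n : ℕ, ((if n = 1 then 1 else 0) : ℝ≥0∞) * W σ n)
        + ∑' n : ℕ, (∑ p ∈ n.divisorsAntidiagonal, ZZ u p.1 * ZZ v p.2) * W σ n :=
        ENNReal.tsum_add
    _ = 1 + sE u σ * sE v σ := by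
        rw [Ekey (ZZ u) (ZZ v) (ZZ_zero u) (ZZ_zero v) σ]
        congr 1
        rw [tsum_eq_single 1 (fun n hn => by rw [if_neg hn, zero_mul]), if_pos rfl, one_mul,
          W_one]
lemma one_le_cast_succ (n : ℕ) : (1 : ℝ) ≤ ((n + 1 : ℕ) : ℝ) := by
  exact_mod_cast Nat.succ_le_succ (Nat.zero_le n)

lemma summable_shift_mono {x : ℕ → ℝ} (hx : ∀ n, n ≠ 0 → 0 ≤ x n) {σ τ : ℝ} (hστ : σ ≤ τ)
    (h : Summable fun n : ℕ => x (n + 1) * ((n + 1 : ℕ) : ℝ) ^ (-σ)) :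
    Summable fun n : ℕ => x (n + 1) * ((n + 1 : ℕ) : ℝ) ^ (-τ) := by
  refine h.of_nonneg_of_le (fun n => mul_nonneg (hx _ (Nat.succ_ne_zero n))
    (Real.rpow_nonneg (by positivity) _)) fun n => ?_
  refine mul_le_mul_of_nonneg_left ?_ (hx _ (Nat.succ_ne_zero n))
  exact Real.rpow_le_rpow_of_exponent_le (one_le_cast_succ n) (neg_le_neg hστ)

lemma tsum_strict_anti {x : ℕ → ℝ} (hx : ∀ n, n ≠ 0 → 0 ≤ x n) (hx2 : 0 < x 2) {σ τ : ℝ}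
    (hστ : σ < τ) (hs : Summable fun n : ℕ => x (n + 1) * ((n + 1 : ℕ) : ℝ) ^ (-σ)) :
    (∑' n : ℕ, x (n + 1) * ((n + 1 : ℕ) : ℝ) ^ (-τ))
      < ∑' n : ℕ, x (n + 1) * ((n + 1 : ℕ) : ℝ) ^ (-σ) := by
  have ht := summable_shift_mono hx hστ.le hs
  have hdiff : Summable fun n : ℕ =>
      x (n + 1) * ((n + 1 : ℕ) : ℝ) ^ (-σ) - x (n + 1) * ((n + 1 : ℕ) : ℝ) ^ (-τ) := hs.sub ht
  have hnn : ∀ n : ℕ, 0 ≤ x (n + 1) * ((n + 1 : ℕ) : ℝ) ^ (-σ)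
      - x (n + 1) * ((n + 1 : ℕ) : ℝ) ^ (-τ) := by
    intro n
    have : ((n + 1 : ℕ) : ℝ) ^ (-τ) ≤ ((n + 1 : ℕ) : ℝ) ^ (-σ) :=
      Real.rpow_le_rpow_of_exponent_le (one_le_cast_succ n) (neg_le_neg hστ.le)
    have := mul_le_mul_of_nonneg_left this (hx _ (Nat.succ_ne_zero n))
    linarith
  have hpos : 0 < x (1 + 1) * ((1 + 1 : ℕ) : ℝ) ^ (-σ)
      - x (1 + 1) * ((1 + 1 : ℕ) : ℝ) ^ (-τ) := by
    have h2 : ((1 + 1 : ℕ) : ℝ) ^ (-τ) < ((1 + 1 : ℕ) : ℝ) ^ (-σ) := by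
      refine Real.rpow_lt_rpow_of_exponent_lt ?_ (neg_lt_neg hστ)
      norm_num
    have := mul_lt_mul_of_pos_left h2 (show (0:ℝ) < x (1+1) from hx2)
    linarith
  have hle : (0:ℝ) < ∑' n : ℕ, (x (n + 1) * ((n + 1 : ℕ) : ℝ) ^ (-σ)
      - x (n + 1) * ((n + 1 : ℕ) : ℝ) ^ (-τ)) :=
    lt_of_lt_of_le hpos (Summable.le_tsum hdiff 1 fun j _ => hnn j)
  rw [Summable.tsum_sub hs ht] at hle
  linarith

lemma sum_Icc_one (f : ℕ → ℝ) (N : ℕ) :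
    ∑ j ∈ Finset.Icc 1 N, f j = ∑ i ∈ Finset.range N, f (i + 1) := by
  rw [← Finset.Ico_add_one_right_eq_Icc, Finset.sum_Ico_eq_sum_range]
  simp [add_comm]

lemma cf_summable {b : ℕ → ℝ} {α : ℝ} (hα : 0 < α) (hb1 : b 1 = 0)
    (hbpos : ∀ n : ℕ, 2 ≤ n → 0 < b n) {σ : ℝ}
    (hbs : Summable fun n : ℕ => b (n + 1) * ((n + 1 : ℕ) : ℝ) ^ (-σ))
    (hg : (∑' n : ℕ, b (n + 1) * ((n + 1 : ℕ) : ℝ) ^ (-σ)) < α) :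
    Summable fun n : ℕ => cf b α (n + 1) * ((n + 1 : ℕ) : ℝ) ^ (-σ) := by
  have hbnn : ∀ n, n ≠ 0 → 0 ≤ b n := by
    intro n hn
    rcases eq_or_ne n 1 with rfl | h1
    · rw [hb1]
    · exact (hbpos n (by omega)).le
  set g : ℝ := ∑' n : ℕ, b (n + 1) * ((n + 1 : ℕ) : ℝ) ^ (-σ) with hgdef
  set fb : ℕ → ℝ := fun j => b j * (j : ℝ) ^ (-σ) with hfb
  set fc : ℕ → ℝ := fun j => cf b α j * (j : ℝ) ^ (-σ) with hfc
  have hfcnn : ∀ j, 0 ≤ fc j := fun j =>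
    mul_nonneg (cf_nonneg hα hbpos j) (Real.rpow_nonneg (by positivity) _)
  have hfbnn : ∀ j, j ≠ 0 → 0 ≤ fb j := fun j hj =>
    mul_nonneg (hbnn j hj) (Real.rpow_nonneg (by positivity) _)
  have hfbsum : ∀ N : ℕ, ∑ d ∈ Finset.Icc 1 N, fb d ≤ g := by
    intro N
    rw [sum_Icc_one]
    exact Summable.sum_le_tsum (Finset.range N) (fun i _ => hfbnn (i + 1) (Nat.succ_ne_zero i)) hbs
  have key : ∀ N : ℕ, (α - g) * (∑ j ∈ Finset.Icc 1 N, fc j) ≤ 1 := by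
    intro N
    set T : ℝ := ∑ j ∈ Finset.Icc 1 N, fc j with hT
    have hTnn : 0 ≤ T := Finset.sum_nonneg fun j _ => hfcnn j
    have main : α * T ≤ 1 + g * T := by
      have expand : α * T = ∑ j ∈ Finset.Icc 1 N,
          ((if j = 1 then (1:ℝ) else 0) + ∑ p ∈ j.divisorsAntidiagonal, b p.1 * cf b α p.2)
            * (j : ℝ) ^ (-σ) := by
        rw [hT, Finset.mul_sum]
        refine Finset.sum_congr rfl fun j _ => ?_
        rw [← cf_rec hα hb1 j, hfc]
        ring
      have hAB : ∑ j ∈ Finset.Icc 1 N,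
          ((if j = 1 then (1:ℝ) else 0) + ∑ p ∈ j.divisorsAntidiagonal, b p.1 * cf b α p.2)
            * (j : ℝ) ^ (-σ)
          = (∑ j ∈ Finset.Icc 1 N, (if j = 1 then (1:ℝ) else 0) * (j : ℝ) ^ (-σ))
            + ∑ j ∈ Finset.Icc 1 N,
                (∑ p ∈ j.divisorsAntidiagonal, b p.1 * cf b α p.2) * (j : ℝ) ^ (-σ) := by
        rw [← Finset.sum_add_distrib]
        exact Finset.sum_congr rfl fun j _ => by ring
      have hA : (∑ j ∈ Finset.Icc 1 N, (if j = 1 then (1:ℝ) else 0) * (j : ℝ) ^ (-σ)) ≤ 1 := by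
        have hsc : ∀ j ∈ Finset.Icc 1 N, (if j = 1 then (1:ℝ) else 0) * (j : ℝ) ^ (-σ)
            = if j = 1 then ((j : ℕ) : ℝ) ^ (-σ) else 0 := by
          intro j _
          split <;> simp
        rw [Finset.sum_congr rfl hsc, Finset.sum_ite_eq' (Finset.Icc 1 N) 1
          (fun j => ((j : ℕ) : ℝ) ^ (-σ))]
        split
        · norm_num
        · norm_num
      have hdisj : (↑(Finset.Icc 1 N) : Set ℕ).PairwiseDisjoint Nat.divisorsAntidiagonal := by
        intro j _ j' _ hne
        simp only [Function.onFun, Finset.disjoint_left]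
        intro p hp hp'
        exact hne ((Nat.mem_divisorsAntidiagonal.mp hp).1.symm.trans
          (Nat.mem_divisorsAntidiagonal.mp hp').1)
      have hB : (∑ j ∈ Finset.Icc 1 N,
          (∑ p ∈ j.divisorsAntidiagonal, b p.1 * cf b α p.2) * (j : ℝ) ^ (-σ)) ≤ g * T := by
        have hterm : ∀ j ∈ Finset.Icc 1 N,
            (∑ p ∈ j.divisorsAntidiagonal, b p.1 * cf b α p.2) * (j : ℝ) ^ (-σ)
              = ∑ p ∈ j.divisorsAntidiagonal, fb p.1 * fc p.2 := by
          intro j _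
          rw [Finset.sum_mul]
          refine Finset.sum_congr rfl fun p hp => ?_
          obtain ⟨hmul, hj0⟩ := Nat.mem_divisorsAntidiagonal.mp hp
          rw [← hmul, hfb, hfc]
          push_cast
          rw [Real.mul_rpow (by positivity) (by positivity)]
          ring
        have hsub : (Finset.Icc 1 N).biUnion Nat.divisorsAntidiagonal
            ⊆ Finset.Icc 1 N ×ˢ Finset.Icc 1 N := by
          intro p hp
          obtain ⟨j, hj, hpj⟩ := Finset.mem_biUnion.mp hp
          obtain ⟨hmul, hj0⟩ := Nat.mem_divisorsAntidiagonal.mp hpj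
          obtain ⟨hj1, hjN⟩ := Finset.mem_Icc.mp hj
          have h10 : p.1 ≠ 0 := by rintro h; rw [h, zero_mul] at hmul; omega
          have h20 : p.2 ≠ 0 := by rintro h; rw [h, mul_zero] at hmul; omega
          have hp1 : p.1 ≤ j := Nat.le_of_dvd (by omega) (Dvd.intro _ hmul)
          have hp2 : p.2 ≤ j := Nat.le_of_dvd (by omega) (Dvd.intro_left _ hmul)
          exact Finset.mem_product.mpr ⟨Finset.mem_Icc.mpr ⟨by omega, by omega⟩,
            Finset.mem_Icc.mpr ⟨by omega, by omega⟩⟩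
        calc ∑ j ∈ Finset.Icc 1 N,
            (∑ p ∈ j.divisorsAntidiagonal, b p.1 * cf b α p.2) * (j : ℝ) ^ (-σ)
            = ∑ j ∈ Finset.Icc 1 N, ∑ p ∈ j.divisorsAntidiagonal, fb p.1 * fc p.2 :=
              Finset.sum_congr rfl hterm
          _ = ∑ p ∈ (Finset.Icc 1 N).biUnion Nat.divisorsAntidiagonal, fb p.1 * fc p.2 :=
              (Finset.sum_biUnion hdisj).symm
          _ ≤ ∑ p ∈ Finset.Icc 1 N ×ˢ Finset.Icc 1 N, fb p.1 * fc p.2 := by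
              refine Finset.sum_le_sum_of_subset_of_nonneg hsub fun p hp _ => ?_
              have h1 : p.1 ≠ 0 := by
                have := (Finset.mem_Icc.mp (Finset.mem_product.mp hp).1).1
                omega
              exact mul_nonneg (hfbnn p.1 h1) (hfcnn p.2)
          _ = (∑ d ∈ Finset.Icc 1 N, fb d) * T := by
              rw [Finset.sum_product, hT, ← Finset.sum_mul_sum]
          _ ≤ g * T := mul_le_mul_of_nonneg_right (hfbsum N) hTnn
      rw [expand, hAB]
      exact add_le_add hA hB
    nlinarith
  have hαg : 0 < α - g := sub_pos.mpr hg
  have bound : ∀ N : ℕ, ∑ i ∈ Finset.range N, fc (i + 1) ≤ (α - g)⁻¹ := by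
    intro N
    rw [← sum_Icc_one]
    rw [← one_div]
    rw [le_div_iff₀ hαg]
    have := key N
    nlinarith [key N]
  exact summable_of_sum_range_le (fun n => hfcnn (n + 1)) bound
lemma LSeries_shift (f : ℕ → ℂ) (s : ℂ) (h : LSeriesSummable f s) :
    (Summable fun n : ℕ => f (n + 1) * ((n + 1 : ℕ) : ℂ) ^ (-s)) ∧
    (∑' n : ℕ, f (n + 1) * ((n + 1 : ℕ) : ℂ) ^ (-s)) = LSeries f s := by
  have hterm : ∀ n : ℕ, LSeries.term f s (n + 1) = f (n + 1) * ((n + 1 : ℕ) : ℂ) ^ (-s) := by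
    intro n
    rw [LSeries.term_of_ne_zero (Nat.succ_ne_zero n), Complex.cpow_neg, div_eq_mul_inv]
  constructor
  · exact ((summable_nat_add_iff 1).mpr h).congr hterm
  · have : LSeries f s = ∑' n : ℕ, LSeries.term f s n := rfl
    rw [this, Summable.tsum_eq_zero_add h, LSeries.term_zero, zero_add]
    exact (tsum_congr hterm).symm


/-- Let `g(s) = ∑_{n ≥ 2} b n * n^{-s}` with positive coefficients
(encoded by `b 1 = 0` and `b n > 0` for `n ≥ 2`), with `σ_a(g) < ∞` (possibly `⊥`).
If `α > 0` and `ρ > σ_a(g)` satisfies `g(ρ) = α`, then `f = 1/(α - g)` is representable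
by a convergent Dirichlet series `∑_{n ≥ 1} c n * n^{-s}` on some right half-plane, and
`σ_a(f) = δ_a(f) = ρ`. -/
theorem statement9 (b : ℕ → ℝ) (hb1 : b 1 = 0) (hbpos : ∀ n : ℕ, 2 ≤ n → 0 < b n)
    (hfin : sigmaA b < ⊤) (α : ℝ) (hα : 0 < α) (ρ : ℝ) (hρ : sigmaA b < (ρ : EReal))
    (hgρ : ∑' n : ℕ, b (n + 1) * ((n + 1 : ℕ) : ℝ) ^ (-ρ) = α) :
    ∃ c : ℕ → ℝ,
      (∃ σ₀ : ℝ, ∀ s : ℂ, σ₀ < s.re →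
        (Summable fun n : ℕ => (c (n + 1) : ℂ) * ((n + 1 : ℕ) : ℂ) ^ (-s)) ∧
        (∑' n : ℕ, (c (n + 1) : ℂ) * ((n + 1 : ℕ) : ℂ) ^ (-s)) =
          ((α : ℂ) - ∑' n : ℕ, (b (n + 1) : ℂ) * ((n + 1 : ℕ) : ℂ) ^ (-s))⁻¹) ∧
      sigmaA c = (ρ : EReal) ∧ deltaA c = (ρ : EReal) := by
  classical
  have hbnn : ∀ n, n ≠ 0 → 0 ≤ b n := by
    intro n hn
    rcases eq_or_ne n 1 with rfl | h1
    · rw [hb1]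
    · exact (hbpos n (by omega)).le
  have hcnn : ∀ n, n ≠ 0 → 0 ≤ cf b α n := fun n hn => (cf_pos hα hbpos n hn).le
  obtain ⟨x, hxmem, hxlt⟩ := sInf_lt_iff.mp hρ
  obtain ⟨σ₁, rfl, hσ₁sum⟩ := hxmem
  have hσ₁ρ : σ₁ < ρ := by exact_mod_cast hxlt
  have hbsum : ∀ σ : ℝ, σ₁ ≤ σ →
      Summable fun n : ℕ => b (n + 1) * ((n + 1 : ℕ) : ℝ) ^ (-σ) :=
    fun σ h => summable_shift_mono hbnn h hσ₁sum
  have hbρ : Summable fun n : ℕ => b (n + 1) * ((n + 1 : ℕ) : ℝ) ^ (-ρ) := hbsum ρ hσ₁ρ.le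
  have hb2 : 0 < b 2 := hbpos 2 le_rfl
  have hglt : ∀ σ : ℝ, ρ < σ → (∑' n : ℕ, b (n + 1) * ((n + 1 : ℕ) : ℝ) ^ (-σ)) < α := by
    intro σ hσ
    rw [← hgρ]
    exact tsum_strict_anti hbnn hb2 hσ hbρ
  have hCsum : ∀ σ : ℝ, ρ < σ →
      Summable fun n : ℕ => cf b α (n + 1) * ((n + 1 : ℕ) : ℝ) ^ (-σ) :=
    fun σ hσ => cf_summable hα hb1 hbpos (hbsum σ (hσ₁ρ.le.trans hσ.le)) (hglt σ hσ)
  -- divergence of the c-series at ρ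
  have hCdiv : ¬ Summable fun n : ℕ => cf b α (n + 1) * ((n + 1 : ℕ) : ℝ) ^ (-ρ) := by
    intro hsum
    have hC := (summable_iff_sE (cf b α) hcnn ρ).mp hsum
    have hid := identityE hα b (cf b α) hbnn hcnn (cf_rec hα hb1) ρ
    have hBρ : sE b ρ = ENNReal.ofReal α := by rw [sE_eq_tsum b hbnn ρ hbρ, hgρ]
    rw [hBρ] at hid
    have hfin2 : ENNReal.ofReal α * sE (cf b α) ρ ≠ ⊤ :=
      ENNReal.mul_ne_top ENNReal.ofReal_ne_top hC
    have h2 : ENNReal.ofReal α * sE (cf b α) ρ + 0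
        = ENNReal.ofReal α * sE (cf b α) ρ + 1 := by
      rw [add_zero]
      nth_rewrite 1 [hid]
      ring
    exact one_ne_zero ((ENNReal.add_right_inj hfin2).mp h2).symm
  -- smooth divergence below ρ
  have hDdiv : ∀ σ : ℝ, σ < ρ → ∃ n : ℕ,
      ¬ Summable fun j : ℕ =>
        smoothCoeff (nthPrime n) (cf b α) (j + 1) * ((j + 1 : ℕ) : ℝ) ^ (-σ) := by
    intro σ hσ
    have hBσ : ENNReal.ofReal α < sE b σ := by
      rcases eq_or_ne (sE b σ) ⊤ with h | h
      · rw [h]; exact ENNReal.ofReal_lt_top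
      · have hsσ : Summable fun n : ℕ => b (n + 1) * ((n + 1 : ℕ) : ℝ) ^ (-σ) :=
          (summable_iff_sE b hbnn σ).mpr h
        have hgt : α < ∑' n : ℕ, b (n + 1) * ((n + 1 : ℕ) : ℝ) ^ (-σ) := by
          rw [← hgρ]; exact tsum_strict_anti hbnn hb2 hσ hsσ
        rw [sE_eq_tsum b hbnn σ hsσ]
        exact (ENNReal.ofReal_lt_ofReal_iff (hα.trans hgt)).mpr hgt
    rw [sE, ENNReal.tsum_eq_iSup_sum] at hBσ
    obtain ⟨F, hF⟩ := lt_iSup_iff.mp hBσ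
    set M := F.sup id with hM
    refine ⟨M, ?_⟩
    set P := nthPrime M with hPdef
    have hMP : M ≤ P := (Nat.nth_strictMono Nat.infinite_setOf_prime).le_apply
    have hP1 : 1 ≤ P := (Nat.prime_nth_prime M).two_le.trans' (by omega)
    have hsmbnn : ∀ n, n ≠ 0 → 0 ≤ smoothCoeff P b n := by
      intro n hn
      unfold smoothCoeff
      split
      · exact hbnn n hn
      · exact le_rfl
    have hsmcnn : ∀ n, n ≠ 0 → 0 ≤ smoothCoeff P (cf b α) n := by
      intro n hn
      unfold smoothCoeff
      split
      · exact hcnn n hn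
      · exact le_rfl
    intro hsum
    have hsmooth_eq : ∀ n ∈ F, ZZ b n * W σ n = ZZ (smoothCoeff P b) n * W σ n := by
      intro n hn
      rcases eq_or_ne n 0 with rfl | hn0
      · rw [ZZ_zero, ZZ_zero]
      · have hgpf : gpf n ≤ P :=
          le_trans (le_trans (gpf_le_self hn0) (Finset.le_sup (f := id) hn)) hMP
        rw [ZZ_of_ne hn0, ZZ_of_ne hn0,
          show smoothCoeff P b n = b n from if_pos hgpf]
    have hGP : ENNReal.ofReal α < sE (smoothCoeff P b) σ := by
      refine lt_of_lt_of_le ?_ (ENNReal.sum_le_tsum F)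
      calc ENNReal.ofReal α < ∑ n ∈ F, ZZ b n * W σ n := hF
        _ = ∑ n ∈ F, ZZ (smoothCoeff P b) n * W σ n := Finset.sum_congr rfl hsmooth_eq
    have hCP := (summable_iff_sE (smoothCoeff P (cf b α)) hsmcnn σ).mp hsum
    have hid := identityE hα (smoothCoeff P b) (smoothCoeff P (cf b α)) hsmbnn hsmcnn
      (cf_rec_smooth hα hb1 hP1) σ
    have hCP0 : sE (smoothCoeff P (cf b α)) σ ≠ 0 := by
      have h1 : ZZ (smoothCoeff P (cf b α)) 1 * W σ 1 ≤ sE (smoothCoeff P (cf b α)) σ :=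
        ENNReal.le_tsum 1
      rw [W_one, mul_one, ZZ_of_ne one_ne_zero,
        show smoothCoeff P (cf b α) 1 = cf b α 1 from if_pos (by rw [gpf_one]; exact hP1),
        cf_one] at h1
      intro h0
      rw [h0] at h1
      exact absurd h1 (not_le.mpr (ENNReal.ofReal_pos.mpr (inv_pos.mpr hα)))
    have hlt2 : ENNReal.ofReal α * sE (smoothCoeff P (cf b α)) σ
        < sE (smoothCoeff P b) σ * sE (smoothCoeff P (cf b α)) σ :=
      (ENNReal.mul_lt_mul_iff_left hCP0 hCP).mpr hGP
    have : ENNReal.ofReal α * sE (smoothCoeff P (cf b α)) σ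
        < ENNReal.ofReal α * sE (smoothCoeff P (cf b α)) σ := by
      calc ENNReal.ofReal α * sE (smoothCoeff P (cf b α)) σ
          < sE (smoothCoeff P b) σ * sE (smoothCoeff P (cf b α)) σ := hlt2
        _ ≤ 1 + sE (smoothCoeff P b) σ * sE (smoothCoeff P (cf b α)) σ := le_add_self
        _ = ENNReal.ofReal α * sE (smoothCoeff P (cf b α)) σ := hid.symm
    exact absurd this (lt_irrefl _)
  refine ⟨cf b α, ?_, ?_, ?_⟩
  · -- the complex half-plane representation
    refine ⟨ρ + 1, fun s hs => ?_⟩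
    have hsρ : ρ < s.re := by linarith
    have hLS : ∀ x : ℕ → ℝ, (∀ n, n ≠ 0 → 0 ≤ x n) →
        (Summable fun n : ℕ => x (n + 1) * ((n + 1 : ℕ) : ℝ) ^ (-s.re)) →
        LSeriesSummable (fun n => (x n : ℂ)) s := by
      intro x hx hsum
      apply Summable.of_norm
      have h2 : Summable fun n : ℕ => ‖LSeries.term (fun n => (x n : ℂ)) s (n + 1)‖ := by
        refine hsum.congr fun n => ?_
        rw [LSeries.norm_term_eq, if_neg (Nat.succ_ne_zero n), Complex.norm_real,
          Real.norm_of_nonneg (hx _ (Nat.succ_ne_zero n)),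
          Real.rpow_neg (by positivity : (0:ℝ) ≤ ((n + 1 : ℕ) : ℝ)), div_eq_mul_inv]
      exact (summable_nat_add_iff 1).mp h2
    have hBsum : LSeriesSummable (fun n => (b n : ℂ)) s :=
      hLS b hbnn (hbsum s.re (by linarith))
    have hCsum' : LSeriesSummable (fun n => (cf b α n : ℂ)) s :=
      hLS (cf b α) hcnn (hCsum s.re hsρ)
    have hconvsum : LSeriesSummable ((fun n => (b n : ℂ)) ⍟ (fun n => (cf b α n : ℂ))) s :=
      hBsum.convolution hCsum'
    have hkey : ∀ n : ℕ, LSeries.term LSeries.delta s n =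
        (α : ℂ) * LSeries.term (fun n => (cf b α n : ℂ)) s n
          - LSeries.term ((fun n => (b n : ℂ)) ⍟ (fun n => (cf b α n : ℂ))) s n := by
      intro n
      rcases eq_or_ne n 0 with rfl | hn0
      · simp
      · rw [LSeries.term_delta, LSeries.term_of_ne_zero hn0, LSeries.term_of_ne_zero hn0]
        simp only [LSeries.convolution_def]
        have hS : (∑ p ∈ n.divisorsAntidiagonal, b p.1 * cf b α p.2)
            = α * cf b α n - (if n = 1 then 1 else 0) := by
          have hrec := cf_rec hα hb1 n
          linarith
        rw [show (∑ p ∈ n.divisorsAntidiagonal, ((b p.1 : ℂ) * (cf b α p.2 : ℂ)))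
            = (((∑ p ∈ n.divisorsAntidiagonal, b p.1 * cf b α p.2 : ℝ)) : ℂ) by
          push_cast
          rfl]
        rw [hS]
        rcases eq_or_ne n 1 with rfl | hn1
        · simp only [if_pos rfl]
          rw [Nat.cast_one, Complex.one_cpow]
          push_cast
          ring
        · simp only [if_neg hn1]
          push_cast
          rw [sub_zero, mul_div_assoc]
          ring
    have hLid : (1 : ℂ) = (α : ℂ) * LSeries (fun n => (cf b α n : ℂ)) s
        - LSeries (fun n => (b n : ℂ)) s * LSeries (fun n => (cf b α n : ℂ)) s := by
      have h1 : LSeries LSeries.delta s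
          = ∑' n : ℕ, ((α : ℂ) * LSeries.term (fun n => (cf b α n : ℂ)) s n
            - LSeries.term ((fun n => (b n : ℂ)) ⍟ (fun n => (cf b α n : ℂ))) s n) :=
        tsum_congr hkey
      rw [Summable.tsum_sub ((hCsum').mul_left _) hconvsum, tsum_mul_left] at h1
      have h2 : LSeries LSeries.delta s = 1 := by rw [LSeries_delta]; rfl
      rw [h2] at h1
      rw [h1]
      rw [show (∑' n : ℕ, LSeries.term ((fun n => (b n : ℂ)) ⍟ (fun n => (cf b α n : ℂ))) s n)
          = LSeries ((fun n => (b n : ℂ)) ⍟ (fun n => (cf b α n : ℂ))) s from rfl]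
      rw [LSeries_convolution' hBsum hCsum']
      rfl
    have hshift1 := LSeries_shift (fun n => (cf b α n : ℂ)) s hCsum'
    have hshift2 := LSeries_shift (fun n => (b n : ℂ)) s hBsum
    obtain ⟨hS1, hE1⟩ := hshift1
    obtain ⟨-, hE2⟩ := hshift2
    refine ⟨hS1, ?_⟩
    rw [hE1, hE2]
    refine eq_inv_of_mul_eq_one_right ?_
    linear_combination -hLid
  · -- sigmaA c = ρ
    unfold sigmaA
    apply le_antisymm
    · by_contra hgt
      push_neg at hgt
      obtain ⟨z, hz1, hz2⟩ := EReal.exists_between_coe_real hgt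
      have hzρ : ρ < z := by exact_mod_cast hz1
      have hmem : (z : EReal) ∈ {x : EReal | ∃ σ : ℝ, x = (σ : EReal) ∧
          Summable fun n : ℕ => cf b α (n + 1) * ((n + 1 : ℕ) : ℝ) ^ (-σ)} :=
        ⟨z, rfl, hCsum z hzρ⟩
      exact absurd (sInf_le hmem) (not_le.mpr hz2)
    · refine le_sInf ?_
      rintro x ⟨σ, rfl, hsum⟩
      rw [EReal.coe_le_coe_iff]
      by_contra hlt
      push_neg at hlt
      exact hCdiv (summable_shift_mono hcnn hlt.le hsum)
  · -- deltaA c = ρ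
    unfold deltaA
    apply le_antisymm
    · by_contra hgt
      push_neg at hgt
      obtain ⟨z, hz1, hz2⟩ := EReal.exists_between_coe_real hgt
      have hzρ : ρ < z := by exact_mod_cast hz1
      have hmem : (z : EReal) ∈ {x : EReal | ∃ σ : ℝ, x = (σ : EReal) ∧ ∀ n : ℕ,
          Summable fun j : ℕ =>
            smoothCoeff (nthPrime n) (cf b α) (j + 1) * ((j + 1 : ℕ) : ℝ) ^ (-σ)} :=
        ⟨z, rfl, fun n => ?_⟩
      case _ => exact absurd (sInf_le hmem) (not_le.mpr hz2)
      refine (hCsum z hzρ).of_nonneg_of_le (fun j => ?_) (fun j => ?_)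
      · refine mul_nonneg ?_ (Real.rpow_nonneg (by positivity) _)
        unfold smoothCoeff
        split
        · exact hcnn _ (Nat.succ_ne_zero j)
        · exact le_rfl
      · refine mul_le_mul_of_nonneg_right ?_ (Real.rpow_nonneg (by positivity) _)
        unfold smoothCoeff
        split
        · exact le_rfl
        · exact hcnn _ (Nat.succ_ne_zero j)
    · refine le_sInf ?_
      rintro x ⟨σ, rfl, hall⟩
      rw [EReal.coe_le_coe_iff]
      by_contra hlt
      push_neg at hlt
      obtain ⟨n, hn⟩ := hDdiv σ hlt
      exact hn (hall n)
end
end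

section
/- Let g(s) = ∑_{n=2}^∞ b_n n^{-s} with b_n > 0 for all n ≥ 2, let α > 0 and ρ ∈ (σ_a(g), ∞) with g(ρ) = α, and for n ≥ 1 let g_n(s) = ∑_{j ≥ 2, gpf(j) ≤ p_n} b_j j^{-s}. Suppose that for every n there exists ρ_n with g_n(ρ_n) = α. Then the sequence {ρ_n} is increasing, ρ_n ≤ ρ for all sufficiently large n, and ρ_n → ρ as n → ∞. -/
open scoped BigOperators Classical

noncomputable section

lemma gpf_two : gpf 2 = 2 := by
  simp [gpf, Nat.Prime.primeFactors Nat.prime_two]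

lemma nthPrime_two_le (n : ℕ) : 2 ≤ nthPrime n :=
  (Nat.nth_mem_of_infinite Nat.infinite_setOf_prime n).two_le

lemma nthPrime_mono : Monotone nthPrime :=
  (Nat.nth_strictMono Nat.infinite_setOf_prime).monotone

lemma nthPrime_self_le (n : ℕ) : n ≤ nthPrime n :=
  (Nat.nth_strictMono Nat.infinite_setOf_prime).le_apply

/-- With `g(s) = ∑_{n ≥ 2} b n * n^{-s}` (positive coefficients,
encoded by `b 1 = 0` and `b n > 0` for `n ≥ 2`), `α > 0`, `ρ > σ_a(g)` with `g(ρ) = α`,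
and `g_n` the subseries supported on `p_{n+1}`-smooth indices: if for every `n` there is
`ρ_n` with `g_n(ρ_n) = α` (the series converging there, i.e. `HasSum`), then the sequence
`{ρ_n}` is increasing, `ρ_n ≤ ρ` for all sufficiently large `n`, and `ρ_n → ρ`. -/
theorem statement10 (b : ℕ → ℝ) (hb1 : b 1 = 0) (hbpos : ∀ n : ℕ, 2 ≤ n → 0 < b n)
    (α : ℝ) (hα : 0 < α) (ρ : ℝ) (hρ : sigmaA b < (ρ : EReal))
    (hgρ : ∑' n : ℕ, b (n + 1) * ((n + 1 : ℕ) : ℝ) ^ (-ρ) = α)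
    (ρseq : ℕ → ℝ)
    (hρseq : ∀ n : ℕ, HasSum
      (fun j : ℕ => smoothCoeff (nthPrime n) b (j + 1) * ((j + 1 : ℕ) : ℝ) ^ (-(ρseq n))) α) :
    Monotone ρseq ∧ (∀ᶠ n in Filter.atTop, ρseq n ≤ ρ) ∧
      Filter.Tendsto ρseq Filter.atTop (nhds ρ) := by
  -- notation
  set G : ℝ → ℕ → ℝ := fun σ j => b (j + 1) * ((j + 1 : ℕ) : ℝ) ^ (-σ) with hGdef
  set F : ℕ → ℝ → ℕ → ℝ :=
    fun n σ j => smoothCoeff (nthPrime n) b (j + 1) * ((j + 1 : ℕ) : ℝ) ^ (-σ) with hFdef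
  have hb0 : ∀ j : ℕ, 0 ≤ b (j + 1) := by
    intro j
    rcases Nat.lt_or_ge (j + 1) 2 with h | h
    · have hj : j = 0 := by omega
      subst hj; simp [hb1]
    · exact (hbpos _ h).le
  have hbase : ∀ j : ℕ, (1 : ℝ) ≤ ((j + 1 : ℕ) : ℝ) := by
    intro j; exact_mod_cast Nat.succ_le_succ (Nat.zero_le j)
  have hpow_pos : ∀ (j : ℕ) (σ : ℝ), 0 < ((j + 1 : ℕ) : ℝ) ^ (-σ) := by
    intro j σ
    exact Real.rpow_pos_of_pos (lt_of_lt_of_le one_pos (hbase j)) _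
  have hpow_anti : ∀ (j : ℕ) {σ τ : ℝ}, σ ≤ τ →
      ((j + 1 : ℕ) : ℝ) ^ (-τ) ≤ ((j + 1 : ℕ) : ℝ) ^ (-σ) := by
    intro j σ τ h
    exact Real.rpow_le_rpow_of_exponent_le (hbase j) (neg_le_neg h)
  have hpow_strict : ∀ {σ τ : ℝ}, σ < τ →
      ((1 + 1 : ℕ) : ℝ) ^ (-τ) < ((1 + 1 : ℕ) : ℝ) ^ (-σ) := by
    intro σ τ h
    exact Real.rpow_lt_rpow_of_exponent_lt (by norm_num) (neg_lt_neg h)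
  have hsc_nonneg : ∀ p j, 0 ≤ smoothCoeff p b (j + 1) := by
    intro p j; unfold smoothCoeff
    split
    · exact hb0 j
    · exact le_refl 0
  have hsc_le : ∀ p j, smoothCoeff p b (j + 1) ≤ b (j + 1) := by
    intro p j; unfold smoothCoeff
    split
    · exact le_refl _
    · exact hb0 j
  have hsc_mono : ∀ {p q : ℕ}, p ≤ q → ∀ j, smoothCoeff p b (j + 1) ≤ smoothCoeff q b (j + 1) := by
    intro p q hpq j; unfold smoothCoeff
    split
    · rw [if_pos (le_trans (by assumption) hpq)]
    · exact hsc_nonneg q j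
  have hsc2 : ∀ n, smoothCoeff (nthPrime n) b (1 + 1) = b 2 := by
    intro n
    unfold smoothCoeff
    rw [if_pos]
    rw [gpf_two]
    exact nthPrime_two_le n
  have hF_nonneg : ∀ n σ j, 0 ≤ F n σ j := fun n σ j =>
    mul_nonneg (hsc_nonneg _ j) (hpow_pos j σ).le
  have hG_nonneg : ∀ σ j, 0 ≤ G σ j := fun σ j => mul_nonneg (hb0 j) (hpow_pos j σ).le
  -- summability of `G ρ`
  have hGρ_sum : Summable (G ρ) := by
    rw [sigmaA] at hρ
    obtain ⟨x, hx, hlt⟩ := sInf_lt_iff.mp hρ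
    obtain ⟨σ, rfl, hσsum⟩ := hx
    have hσρ : σ ≤ ρ := by exact_mod_cast hlt.le
    exact Summable.of_nonneg_of_le (hG_nonneg ρ)
      (fun j => mul_le_mul_of_nonneg_left (hpow_anti j hσρ) (hb0 j)) hσsum
  -- `ρseq n ≤ ρ` for every `n`
  have hle : ∀ n, ρseq n ≤ ρ := by
    intro n
    by_contra h
    push_neg at h
    have h1 : F n (ρseq n) ≤ G ρ := fun j =>
      mul_le_mul (hsc_le _ j) (hpow_anti j h.le) (hpow_pos j _).le (hb0 j)
    have h2 : F n (ρseq n) 1 < G ρ 1 := by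
      show smoothCoeff (nthPrime n) b (1 + 1) * _ < b (1 + 1) * _
      rw [hsc2 n]
      exact mul_lt_mul_of_pos_left (hpow_strict h) (hbpos 2 le_rfl)
    have hlt := Summable.tsum_lt_tsum h1 h2 (hρseq n).summable hGρ_sum
    rw [(hρseq n).tsum_eq, hgρ] at hlt
    exact lt_irrefl α hlt
  -- monotonicity
  have hmono : Monotone ρseq := by
    refine monotone_nat_of_le_succ (fun n => ?_)
    by_contra h
    push_neg at h
    have h1 : F n (ρseq n) ≤ F (n + 1) (ρseq (n + 1)) := fun j =>
      mul_le_mul (hsc_mono (nthPrime_mono (Nat.le_succ n)) j) (hpow_anti j h.le)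
        (hpow_pos j _).le (hsc_nonneg _ j)
    have h2 : F n (ρseq n) 1 < F (n + 1) (ρseq (n + 1)) 1 := by
      show smoothCoeff (nthPrime n) b (1 + 1) * _ <
        smoothCoeff (nthPrime (n + 1)) b (1 + 1) * _
      rw [hsc2 n, hsc2 (n + 1)]
      exact mul_lt_mul_of_pos_left (hpow_strict h) (hbpos 2 le_rfl)
    have hlt := Summable.tsum_lt_tsum h1 h2 (hρseq n).summable (hρseq (n + 1)).summable
    rw [(hρseq n).tsum_eq, (hρseq (n + 1)).tsum_eq] at hlt
    exact lt_irrefl α hlt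
  -- the limit
  have hbdd : BddAbove (Set.range ρseq) := ⟨ρ, by rintro _ ⟨n, rfl⟩; exact hle n⟩
  set L := ⨆ n, ρseq n with hLdef
  have hρL : ∀ n, ρseq n ≤ L := fun n => le_ciSup hbdd n
  have hLρ : L ≤ ρ := ciSup_le hle
  -- each truncated series at `L` is summable with sum `≤ α`
  have hFL : ∀ n, Summable (F n L) ∧ ∑' j, F n L j ≤ α := by
    intro n
    have hterm : ∀ j, F n L j ≤ F n (ρseq n) j := fun j =>
      mul_le_mul_of_nonneg_left (hpow_anti j (hρL n)) (hsc_nonneg _ j)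
    have hsum : Summable (F n L) :=
      Summable.of_nonneg_of_le (hF_nonneg n L) hterm (hρseq n).summable
    refine ⟨hsum, ?_⟩
    calc ∑' j, F n L j ≤ ∑' j, F n (ρseq n) j :=
          Summable.tsum_le_tsum hterm hsum (hρseq n).summable
      _ = α := (hρseq n).tsum_eq
  -- partial sums of `G L` are bounded by `α`
  have hGLpartial : ∀ N : ℕ, ∑ j ∈ Finset.range N, G L j ≤ α := by
    intro N
    set m := (Finset.range N).sup (fun j => gpf (j + 1)) with hmdef
    have heq : ∀ j ∈ Finset.range N, G L j = F m L j := by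
      intro j hj
      have h1 : gpf (j + 1) ≤ nthPrime m :=
        le_trans (Finset.le_sup (f := fun j => gpf (j + 1)) hj) (nthPrime_self_le m)
      show b (j + 1) * _ = smoothCoeff (nthPrime m) b (j + 1) * _
      unfold smoothCoeff
      rw [if_pos h1]
    rw [Finset.sum_congr rfl heq]
    calc ∑ j ∈ Finset.range N, F m L j ≤ ∑' j, F m L j :=
          Summable.sum_le_tsum _ (fun j _ => hF_nonneg m L j) (hFL m).1
      _ ≤ α := (hFL m).2
  have hGL_sum : Summable (G L) := summable_of_sum_range_le (hG_nonneg L) hGLpartial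
  have hGL_le : ∑' j, G L j ≤ α := Summable.tsum_le_of_sum_range_le hGL_sum hGLpartial
  -- the limit equals `ρ`
  have hLeq : L = ρ := by
    by_contra hne
    have hL : L < ρ := lt_of_le_of_ne hLρ hne
    have h1 : G ρ ≤ G L := fun j => mul_le_mul_of_nonneg_left (hpow_anti j hL.le) (hb0 j)
    have h2 : G ρ 1 < G L 1 := mul_lt_mul_of_pos_left (hpow_strict hL) (hbpos 2 le_rfl)
    have hlt := Summable.tsum_lt_tsum h1 h2 hGρ_sum hGL_sum
    rw [hgρ] at hlt
    exact absurd hGL_le (not_le_of_gt hlt)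
  refine ⟨hmono, Filter.Eventually.of_forall hle, ?_⟩
  have := tendsto_atTop_ciSup hmono hbdd
  rwa [← hLdef, hLeq] at this
end
end

section
/- Let r ≥ 1 and let {c_n}_{n≥1} be the multiplicative sequence with c_{p^m} = p^{r−1} for every prime p and integer m ≥ 1. Then the Dirichlet series f(s) = ∑_{n=1}^∞ c_n n^{-s} satisfies σ_a(f) = r. -/
open scoped BigOperators Classical

noncomputable section

-- Auxiliary lemmas for statement12

lemma coeff_le_rpow (r : ℝ) (hr : 1 ≤ r) (c : ℕ → ℝ) (hc1 : c 1 = 1)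
    (hcpos : ∀ n : ℕ, 1 ≤ n → 0 < c n)
    (hcpp : ∀ p k : ℕ, p.Prime → 1 ≤ k → c (p ^ k) = (p : ℝ) ^ (r - 1))
    (hcmul : ∀ m n : ℕ, 1 ≤ m → 1 ≤ n → Nat.Coprime m n → c (m * n) = c m * c n) :
    ∀ n : ℕ, 1 ≤ n → c n ≤ (n : ℝ) ^ (r - 1) := by
  intro n
  induction n using Nat.recOnPosPrimePosCoprime with
  | prime_pow p k hp hk =>
    intro _
    rw [hcpp p k hp hk]
    have h1 : (p : ℝ) ≤ ((p ^ k : ℕ) : ℝ) := by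
      push_cast
      exact_mod_cast Nat.le_self_pow hk.ne' p
    exact Real.rpow_le_rpow (by positivity) h1 (by linarith)
  | zero => intro h; omega
  | one => intro _; rw [hc1]; simp
  | coprime a b ha hb hab iha ihb =>
    intro _
    have ha1 : 1 ≤ a := le_of_lt ha
    have hb1 : 1 ≤ b := le_of_lt hb
    rw [hcmul a b ha1 hb1 hab]
    have h1 : c a * c b ≤ (a : ℝ) ^ (r - 1) * (b : ℝ) ^ (r - 1) := by
      have := hcpos a ha1
      have := hcpos b hb1
      have := iha ha1
      have := ihb hb1
      have hbnn : (0:ℝ) ≤ (b : ℝ) ^ (r - 1) := by positivity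
      nlinarith
    calc c a * c b ≤ (a : ℝ) ^ (r - 1) * (b : ℝ) ^ (r - 1) := h1
      _ = ((a * b : ℕ) : ℝ) ^ (r - 1) := by
          push_cast
          rw [← Real.mul_rpow (by positivity) (by positivity)]

lemma summable_of_gt (r : ℝ) (hr : 1 ≤ r) (c : ℕ → ℝ) (hc1 : c 1 = 1)
    (hcpos : ∀ n : ℕ, 1 ≤ n → 0 < c n)
    (hcpp : ∀ p k : ℕ, p.Prime → 1 ≤ k → c (p ^ k) = (p : ℝ) ^ (r - 1))
    (hcmul : ∀ m n : ℕ, 1 ≤ m → 1 ≤ n → Nat.Coprime m n → c (m * n) = c m * c n)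
    (σ : ℝ) (hσ : r < σ) :
    Summable fun n : ℕ => c (n + 1) * ((n + 1 : ℕ) : ℝ) ^ (-σ) := by
  have hmaj : Summable fun n : ℕ => ((n + 1 : ℕ) : ℝ) ^ (r - 1 - σ) := by
    have h := Real.summable_nat_rpow.mpr (show r - 1 - σ < -1 by linarith)
    exact (summable_nat_add_iff 1).mpr h
  apply hmaj.of_nonneg_of_le
  · intro n
    have hc := hcpos (n + 1) (by omega)
    positivity
  · intro n
    have hpos : (0:ℝ) < ((n + 1 : ℕ) : ℝ) := by positivity
    have hb := coeff_le_rpow r hr c hc1 hcpos hcpp hcmul (n + 1) (by omega)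
    calc c (n + 1) * ((n + 1 : ℕ) : ℝ) ^ (-σ)
        ≤ ((n + 1 : ℕ) : ℝ) ^ (r - 1) * ((n + 1 : ℕ) : ℝ) ^ (-σ) := by
          have : (0:ℝ) ≤ ((n + 1 : ℕ) : ℝ) ^ (-σ) := by positivity
          exact mul_le_mul_of_nonneg_right hb this
      _ = ((n + 1 : ℕ) : ℝ) ^ (r - 1 - σ) := by
          rw [← Real.rpow_add hpos]; ring_nf

lemma not_summable_of_le (r : ℝ) (hr : 1 ≤ r) (c : ℕ → ℝ)
    (hcpp : ∀ p k : ℕ, p.Prime → 1 ≤ k → c (p ^ k) = (p : ℝ) ^ (r - 1))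
    (hcpos : ∀ n : ℕ, 1 ≤ n → 0 < c n)
    (σ : ℝ) (hσ : σ ≤ r) :
    ¬ Summable fun n : ℕ => c (n + 1) * ((n + 1 : ℕ) : ℝ) ^ (-σ) := by
  intro hS
  have hind : Summable fun n : ℕ =>
      ({p | p.Prime}.indicator (fun m : ℕ => 1 / (m : ℝ))) (n + 1) := by
    apply hS.of_nonneg_of_le
    · intro n
      exact Set.indicator_nonneg (fun m _ => by positivity) _
    · intro n
      by_cases hp : (n + 1) ∈ {p | p.Prime}
      · rw [Set.indicator_of_mem hp]
        have hp' : (n + 1).Prime := hp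
        have h2 : (2 : ℝ) ≤ ((n + 1 : ℕ) : ℝ) := by exact_mod_cast hp'.two_le
        have hpos : (0:ℝ) < ((n + 1 : ℕ) : ℝ) := by linarith
        have := hcpp (n + 1) 1 hp' le_rfl
        rw [pow_one] at this
        rw [this, ← Real.rpow_add hpos]
        calc 1 / ((n + 1 : ℕ) : ℝ) = ((n + 1 : ℕ) : ℝ) ^ (-1 : ℝ) := by
              rw [Real.rpow_neg_one]; exact one_div _
          _ ≤ ((n + 1 : ℕ) : ℝ) ^ (r - 1 + -σ) :=
              Real.rpow_le_rpow_of_exponent_le (by linarith) (by linarith)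
      · rw [Set.indicator_of_notMem hp]
        have := hcpos (n + 1) (by omega)
        positivity
  exact not_summable_one_div_on_primes ((summable_nat_add_iff 1).mp hind)

/-- Let `r ≥ 1` and let `c` be the multiplicative sequence of positive
reals with `c (p^m) = p^{r-1}` for every prime `p` and `m ≥ 1`. Then the Dirichlet series
`f(s) = ∑_{n ≥ 1} c n * n^{-s}` satisfies `σ_a(f) = r`. -/
theorem statement12 (r : ℝ) (hr : 1 ≤ r) (c : ℕ → ℝ) (hc1 : c 1 = 1)
    (hcpos : ∀ n : ℕ, 1 ≤ n → 0 < c n)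
    (hcpp : ∀ p k : ℕ, p.Prime → 1 ≤ k → c (p ^ k) = (p : ℝ) ^ (r - 1))
    (hcmul : ∀ m n : ℕ, 1 ≤ m → 1 ≤ n → Nat.Coprime m n → c (m * n) = c m * c n) :
    sigmaA c = (r : EReal) := by
  unfold sigmaA
  apply le_antisymm
  · apply le_of_forall_gt_imp_ge_of_dense
    intro x hx
    induction x using EReal.rec with
    | bot => exact absurd hx (by simp)
    | top => exact le_top
    | coe y =>
      have hy : r < y := by exact_mod_cast hx
      exact sInf_le ⟨y, rfl, summable_of_gt r hr c hc1 hcpos hcpp hcmul y hy⟩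
  · apply le_sInf
    rintro x ⟨σ, rfl, hsum⟩
    have : r < σ := by
      by_contra h
      exact not_summable_of_le r hr c hcpp hcpos σ (le_of_not_gt h) hsum
    exact_mod_cast this.le
end
end

section
/- Let r ≥ 0 and let {c_n}_{n≥1} be the multiplicative sequence with c_{p^m} = p^{r−1} for every prime p and integer m ≥ 1. Then the Dirichlet series f(s) = ∑_{n=1}^∞ c_n n^{-s} satisfies δ_a(f) = 0 and σ_a(f) ≥ r. -/
open scoped BigOperators Classical

noncomputable section

private lemma gpf_le_iff_mem_smooth {j p : ℕ} (hp : 1 ≤ p) (hj : j ≠ 0) :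
    gpf j ≤ p ↔ j ∈ Nat.smoothNumbers (p + 1) := by
  rw [Nat.mem_smoothNumbers]
  unfold gpf
  split_ifs with h
  · subst h
    simp only [hp, true_iff]
    refine ⟨one_ne_zero, fun q hq => ?_⟩
    simp [Nat.primeFactorsList_one] at hq
  · rw [Finset.sup_le_iff]
    constructor
    · intro H
      refine ⟨hj, fun q hq => ?_⟩
      have hq' : q ∈ j.primeFactors := by
        rw [Nat.mem_primeFactors]
        exact ⟨Nat.prime_of_mem_primeFactorsList hq, Nat.dvd_of_mem_primeFactorsList hq, hj⟩
      exact Nat.lt_succ_of_le (H q hq')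
    · rintro ⟨-, H⟩ q hq
      rw [Nat.mem_primeFactors] at hq
      exact Nat.lt_succ_iff.mp (H q ((Nat.mem_primeFactorsList hj).mpr ⟨hq.1, hq.2.1⟩))

private lemma smooth_summable (r : ℝ) (c : ℕ → ℝ) (hc1 : c 1 = 1)
    (hcpp : ∀ p k : ℕ, p.Prime → 1 ≤ k → c (p ^ k) = (p : ℝ) ^ (r - 1))
    (hcmul : ∀ m n : ℕ, 1 ≤ m → 1 ≤ n → Nat.Coprime m n → c (m * n) = c m * c n)
    {σ : ℝ} (hσ : 0 < σ) (p : ℕ) (hp : p.Prime) :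
    Summable fun j : ℕ => smoothCoeff p c (j + 1) * ((j + 1 : ℕ) : ℝ) ^ (-σ) := by
  set f : ℕ → ℝ := fun j => if j = 0 then 0 else c j * (j : ℝ) ^ (-σ) with hfdef
  have hf1 : f 1 = 1 := by simp [hfdef, hc1]
  have hmul : ∀ {m n : ℕ}, Nat.Coprime m n → f (m * n) = f m * f n := by
    intro m n hmn
    rcases Nat.eq_zero_or_pos m with hm | hm
    · subst hm; rw [Nat.coprime_zero_left] at hmn; subst hmn; simp [hfdef]
    rcases Nat.eq_zero_or_pos n with hn | hn
    · subst hn; rw [Nat.coprime_zero_right] at hmn; subst hmn; simp [hfdef]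
    have hmn0 : m * n ≠ 0 := by positivity
    simp only [hfdef, if_neg hmn0, if_neg (Nat.pos_iff_ne_zero.mp hm),
      if_neg (Nat.pos_iff_ne_zero.mp hn)]
    rw [hcmul m n hm hn hmn, Nat.cast_mul,
      Real.mul_rpow (by positivity) (by positivity)]
    ring
  have hsum : ∀ {q : ℕ}, q.Prime → Summable fun n : ℕ => ‖f (q ^ n)‖ := by
    intro q hq
    have hq1 : (1 : ℝ) < q := by exact_mod_cast hq.one_lt
    set t : ℝ := (q : ℝ) ^ (-σ) with htdef
    have ht0 : 0 ≤ t := Real.rpow_nonneg (by positivity) _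
    have ht1 : t < 1 := Real.rpow_lt_one_of_one_lt_of_neg hq1 (neg_neg_of_pos hσ)
    refine Summable.of_nonneg_of_le (fun k => norm_nonneg _) (fun k => ?_)
      ((summable_geometric_of_lt_one ht0 ht1).mul_left (max 1 ((q : ℝ) ^ (r - 1))))
    rcases Nat.eq_zero_or_pos k with rfl | hk
    · simp only [pow_zero, hf1, norm_one]
      rw [mul_one]
      exact le_max_left _ _
    · have hval : f (q ^ k) = (q : ℝ) ^ (r - 1) * t ^ k := by
        rw [hfdef]
        simp only [if_neg (pow_ne_zero k hq.pos.ne')]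
        rw [hcpp q k hq hk]
        congr 1
        rw [Nat.cast_pow, htdef, ← Real.rpow_natCast ((q : ℝ) ^ (-σ)) k,
          ← Real.rpow_natCast (q : ℝ) k, ← Real.rpow_mul (by positivity),
          ← Real.rpow_mul (by positivity), mul_comm]
      rw [hval, Real.norm_eq_abs, abs_of_nonneg (by positivity)]
      exact mul_le_mul_of_nonneg_right (le_max_right _ _) (pow_nonneg ht0 k)
  have key := (EulerProduct.summable_and_hasSum_smoothNumbers_prod_primesBelow_tsum
    hf1 hmul hsum (p + 1)).1
  have key2 : Summable (Set.indicator (Nat.smoothNumbers (p + 1)) f) :=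
    summable_subtype_iff_indicator.mp key.of_norm
  have key3 := (summable_nat_add_iff 1).mpr key2
  refine key3.congr fun j => ?_
  have hp1 : 1 ≤ p := hp.one_lt.le
  by_cases h : gpf (j + 1) ≤ p
  · have hmem : (j + 1) ∈ Nat.smoothNumbers (p + 1) :=
      (gpf_le_iff_mem_smooth hp1 (Nat.succ_ne_zero j)).mp h
    rw [Set.indicator_of_mem hmem, smoothCoeff, if_pos h, hfdef]
    simp [Nat.succ_ne_zero j]
  · have hmem : (j + 1) ∉ Nat.smoothNumbers (p + 1) := fun hmem =>
      h ((gpf_le_iff_mem_smooth hp1 (Nat.succ_ne_zero j)).mpr hmem)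
    rw [Set.indicator_of_notMem hmem, smoothCoeff, if_neg h, zero_mul]

/-- Let `r ≥ 0` and let `c` be the multiplicative sequence of positive
reals with `c (p^m) = p^{r-1}` for every prime `p` and `m ≥ 1`. Then the Dirichlet series
`f(s) = ∑_{n ≥ 1} c n * n^{-s}` satisfies `δ_a(f) = 0` and `σ_a(f) ≥ r`. -/
theorem statement13 (r : ℝ) (hr : 0 ≤ r) (c : ℕ → ℝ) (hc1 : c 1 = 1)
    (hcpos : ∀ n : ℕ, 1 ≤ n → 0 < c n)
    (hcpp : ∀ p k : ℕ, p.Prime → 1 ≤ k → c (p ^ k) = (p : ℝ) ^ (r - 1))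
    (hcmul : ∀ m n : ℕ, 1 ≤ m → 1 ≤ n → Nat.Coprime m n → c (m * n) = c m * c n) :
    deltaA c = (0 : EReal) ∧ (r : EReal) ≤ sigmaA c := by
  have h2 : nthPrime 0 = 2 := Nat.nth_prime_zero_eq_two
  -- any σ admissible for `deltaA` is positive
  have hpos_of_mem : ∀ σ : ℝ,
      (∀ n : ℕ, Summable fun j : ℕ =>
        smoothCoeff (nthPrime n) c (j + 1) * ((j + 1 : ℕ) : ℝ) ^ (-σ)) → 0 < σ := by
    intro σ hS
    by_contra hσ
    push_neg at hσ
    have hs := hS 0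
    rw [h2] at hs
    have hterm : ∀ k : ℕ, (2 : ℝ) ^ (r - 1) ≤
        smoothCoeff 2 c ((2 ^ (k + 1) - 1) + 1) * (((2 ^ (k + 1) - 1) + 1 : ℕ) : ℝ) ^ (-σ) := by
      intro k
      have he : (2 ^ (k + 1) - 1) + 1 = 2 ^ (k + 1) :=
        Nat.succ_pred_eq_of_pos (pow_pos (by norm_num) _)
      rw [he]
      have hne1 : (2 : ℕ) ^ (k + 1) ≠ 1 := (Nat.one_lt_two_pow' k).ne'
      have hgpf : gpf (2 ^ (k + 1)) = 2 := by
        unfold gpf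
        rw [if_neg hne1, Nat.primeFactors_prime_pow (Nat.succ_ne_zero k) Nat.prime_two]
        simp
      rw [smoothCoeff, if_pos (le_of_eq hgpf),
        hcpp 2 (k + 1) Nat.prime_two (Nat.succ_le_succ (Nat.zero_le k))]
      have hb : (1 : ℝ) ≤ ((2 ^ (k + 1) : ℕ) : ℝ) := by
        exact_mod_cast Nat.one_le_two_pow
      nth_rewrite 1 [← mul_one ((2 : ℝ) ^ (r - 1))]
      exact mul_le_mul_of_nonneg_left (Real.one_le_rpow hb (neg_nonneg.mpr hσ))
        (Real.rpow_nonneg two_pos.le _)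
    have hmono : Filter.Tendsto (fun k : ℕ => 2 ^ (k + 1) - 1) Filter.atTop Filter.atTop := by
      refine Filter.tendsto_atTop_atTop.mpr fun b => ⟨b, fun a ha => ?_⟩
      have := @Nat.lt_two_pow_self (a + 1)
      omega
    have hcomp : Filter.Tendsto
        (fun k : ℕ => smoothCoeff 2 c ((2 ^ (k + 1) - 1) + 1) *
          (((2 ^ (k + 1) - 1) + 1 : ℕ) : ℝ) ^ (-σ)) Filter.atTop (nhds 0) :=
      (hs.tendsto_atTop_zero).comp hmono
    have hle : (2 : ℝ) ^ (r - 1) ≤ 0 := ge_of_tendsto' hcomp hterm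
    exact absurd hle (not_le.mpr (Real.rpow_pos_of_pos two_pos _))
  -- any σ admissible for `sigmaA` satisfies `r ≤ σ`
  have hsig : ∀ σ : ℝ,
      Summable (fun n : ℕ => c (n + 1) * ((n + 1 : ℕ) : ℝ) ^ (-σ)) → r ≤ σ := by
    intro σ hs
    by_contra hσ
    push_neg at hσ
    set F : ℕ → ℝ := fun n => if n = 0 then 0 else c n * (n : ℝ) ^ (-σ) with hFdef
    have hFs : Summable F := by
      refine (summable_nat_add_iff 1).mp (hs.congr fun n => ?_)
      simp [hFdef, Nat.succ_ne_zero n]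
    have hcontr : Summable (Set.indicator {p : ℕ | Nat.Prime p} fun n : ℕ => (1 : ℝ) / n) := by
      refine Summable.of_nonneg_of_le
        (fun n => Set.indicator_nonneg (fun m _ => by positivity) n) (fun n => ?_) hFs
      by_cases hn : n ∈ {p : ℕ | Nat.Prime p}
      · rw [Set.indicator_of_mem hn]
        have hp : n.Prime := hn
        have h1n : (1 : ℝ) < n := by exact_mod_cast hp.one_lt
        have hcn : c n = (n : ℝ) ^ (r - 1) := by
          have := hcpp n 1 hp le_rfl
          rwa [pow_one] at this
        rw [hFdef]
        simp only [if_neg hp.pos.ne']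
        rw [hcn, ← Real.rpow_add (by linarith), one_div, ← Real.rpow_neg_one (n : ℝ)]
        exact (Real.rpow_le_rpow_left_iff h1n).mpr (by linarith)
      · rw [Set.indicator_of_notMem hn, hFdef]
        rcases Nat.eq_zero_or_pos n with rfl | hn1
        · simp
        · have := (hcpos n hn1).le
          simp only [if_neg hn1.ne']
          positivity
    exact not_summable_one_div_on_primes hcontr
  constructor
  · apply le_antisymm
    · by_contra hlt
      push_neg at hlt
      obtain ⟨z, hz0, hzS⟩ := EReal.exists_between_coe_real hlt
      have hz0' : (0 : ℝ) < z := by exact_mod_cast hz0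
      have hmem : (z : EReal) ∈ {x : EReal | ∃ σ : ℝ, x = (σ : EReal) ∧ ∀ n : ℕ,
          Summable fun j : ℕ => smoothCoeff (nthPrime n) c (j + 1) * ((j + 1 : ℕ) : ℝ) ^ (-σ)} :=
        ⟨z, rfl, fun n => smooth_summable r c hc1 hcpp hcmul hz0' _ (Nat.prime_nth_prime n)⟩
      exact absurd (sInf_le hmem) (not_le.mpr hzS)
    · apply le_sInf
      rintro x ⟨σ, rfl, hσ⟩
      exact_mod_cast (hpos_of_mem σ hσ).le
  · apply le_sInf
    rintro x ⟨σ, rfl, hσ⟩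
    exact_mod_cast hsig σ hσ
end
end

section
/- Let {a_n}_{n≥1} ⊆ (0, ∞) with f(s) = ∑_{n=1}^∞ a_n n^{-s} satisfying σ_a(f) < ∞. Then sup over all sequences {b_n} ⊆ ℂ with ∑_{n=1}^∞ |b_n|²/a_n < ∞ of the abscissa σ_a(∑_{n=1}^∞ b_n n^{-s}) equals σ_a(f)/2. In particular, for every ε > 0 the choice b_n = a_n n^{-(σ_a(f)/2 + ε)} satisfies ∑ |b_n|²/a_n < ∞ and yields a Dirichlet series with abscissa of absolute convergence σ_a(f)/2 − ε. -/
open scoped BigOperators Classical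

noncomputable section

lemma summable_mono_abscissa (c : ℕ → ℝ) (hc : ∀ n : ℕ, 0 ≤ c (n + 1)) {σ σ' : ℝ}
    (h : σ ≤ σ') (hs : Summable fun n : ℕ => c (n + 1) * ((n + 1 : ℕ) : ℝ) ^ (-σ)) :
    Summable fun n : ℕ => c (n + 1) * ((n + 1 : ℕ) : ℝ) ^ (-σ') := by
  refine hs.of_nonneg_of_le (fun n => mul_nonneg (hc n) (by positivity)) (fun n => ?_)
  refine mul_le_mul_of_nonneg_left ?_ (hc n)
  exact Real.rpow_le_rpow_of_exponent_le (by exact_mod_cast Nat.one_le_iff_ne_zero.mpr (by simp))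
    (by linarith)

lemma sigmaA_le_of_summable (c : ℕ → ℝ) {σ : ℝ}
    (h : Summable fun n : ℕ => c (n + 1) * ((n + 1 : ℕ) : ℝ) ^ (-σ)) :
    sigmaA c ≤ (σ : EReal) :=
  sInf_le ⟨σ, rfl, h⟩

lemma summable_of_sigmaA_lt (c : ℕ → ℝ) (hc : ∀ n : ℕ, 0 ≤ c (n + 1)) {σ : ℝ}
    (h : sigmaA c < (σ : EReal)) :
    Summable fun n : ℕ => c (n + 1) * ((n + 1 : ℕ) : ℝ) ^ (-σ) := by
  obtain ⟨x, ⟨σ₀, rfl, hs⟩, hx⟩ := sInf_lt_iff.mp h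
  exact summable_mono_abscissa c hc (le_of_lt (by exact_mod_cast hx)) hs

lemma EReal.le_coe_of_forall (x : EReal) (y : ℝ)
    (h : ∀ ε : ℝ, 0 < ε → x ≤ ((y + ε : ℝ) : EReal)) : x ≤ (y : EReal) := by
  by_contra h'
  push_neg at h'
  obtain ⟨r, hr1, hr2⟩ := EReal.exists_between_coe_real h'
  have := h (r - y) (by have h1 : y < r := by exact_mod_cast hr1
                        linarith)
  simp only [add_sub_cancel] at this
  exact absurd (lt_of_le_of_lt this hr2) (lt_irrefl _)

lemma EReal.coe_le_of_forall (x : EReal) (y : ℝ)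
    (h : ∀ ε : ℝ, 0 < ε → ((y - ε : ℝ) : EReal) ≤ x) : (y : EReal) ≤ x := by
  by_contra h'
  push_neg at h'
  obtain ⟨r, hr1, hr2⟩ := EReal.exists_between_coe_real h'
  have := h (y - r) (by have h1 : r < y := by exact_mod_cast hr2
                        linarith)
  simp only [sub_sub_cancel] at this
  exact absurd (lt_of_lt_of_le hr1 this) (lt_irrefl _)

lemma sigmaA_congr (c d : ℕ → ℝ) (h : ∀ n : ℕ, c (n + 1) = d (n + 1)) :
    sigmaA c = sigmaA d := by
  unfold sigmaA
  congr 1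
  ext x
  constructor <;> rintro ⟨σ, rfl, hs⟩ <;> refine ⟨σ, rfl, ?_⟩
  · exact hs.congr fun n => by rw [h n]
  · exact hs.congr fun n => by rw [h n]

lemma sigmaA_shift (c : ℕ → ℝ) (hc : ∀ n : ℕ, 0 ≤ c (n + 1)) (σf t : ℝ)
    (h : sigmaA c = (σf : EReal)) :
    sigmaA (fun n => c n * (n : ℝ) ^ (-t)) = ((σf - t : ℝ) : EReal) := by
  have key : ∀ σ : ℝ,
      (fun n : ℕ => (c (n + 1) * ((n + 1 : ℕ) : ℝ) ^ (-t)) * ((n + 1 : ℕ) : ℝ) ^ (-σ)) =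
      (fun n : ℕ => c (n + 1) * ((n + 1 : ℕ) : ℝ) ^ (-(t + σ))) := by
    intro σ
    funext n
    rw [mul_assoc, ← Real.rpow_add (by positivity), neg_add]
  refine le_antisymm ?_ ?_
  · refine EReal.le_coe_of_forall _ _ fun ε hε => ?_
    refine sInf_le ⟨σf - t + ε, rfl, ?_⟩
    rw [show (fun n : ℕ => (fun n => c n * (n : ℝ) ^ (-t)) (n + 1) *
        ((n + 1 : ℕ) : ℝ) ^ (-(σf - t + ε))) =
        (fun n : ℕ => (c (n + 1) * ((n + 1 : ℕ) : ℝ) ^ (-t)) *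
        ((n + 1 : ℕ) : ℝ) ^ (-(σf - t + ε))) from rfl, key]
    have : t + (σf - t + ε) = σf + ε := by ring
    rw [this]
    exact summable_of_sigmaA_lt c hc (by rw [h]; exact_mod_cast lt_add_of_pos_right σf hε)
  · refine le_sInf ?_
    rintro x ⟨σ, rfl, hs⟩
    rw [show (fun n : ℕ => (fun n => c n * (n : ℝ) ^ (-t)) (n + 1) *
        ((n + 1 : ℕ) : ℝ) ^ (-σ)) =
        (fun n : ℕ => (c (n + 1) * ((n + 1 : ℕ) : ℝ) ^ (-t)) *
        ((n + 1 : ℕ) : ℝ) ^ (-σ)) from rfl, key] at hs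
    have h1 : sigmaA c ≤ ((t + σ : ℝ) : EReal) := sigmaA_le_of_summable c hs
    rw [h] at h1
    have : σf ≤ t + σ := by exact_mod_cast h1
    exact_mod_cast (by linarith : σf - t ≤ σ)

lemma summable_cs (a : ℕ → ℝ) (hpos : ∀ n : ℕ, 1 ≤ n → 0 < a n) (b : ℕ → ℂ)
    (hb : Summable fun n : ℕ => ‖b (n + 1)‖ ^ 2 / a (n + 1)) {σ : ℝ}
    (ha : Summable fun n : ℕ => a (n + 1) * ((n + 1 : ℕ) : ℝ) ^ (-(2 * σ))) :
    Summable fun n : ℕ => ‖b (n + 1)‖ * ((n + 1 : ℕ) : ℝ) ^ (-σ) := by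
  refine Summable.of_nonneg_of_le (fun n => by positivity) (fun n => ?_)
    ((hb.add ha).div_const 2)
  set x := ‖b (n + 1)‖ with hx
  set A := a (n + 1) with hA
  set t := ((n + 1 : ℕ) : ℝ) ^ (-σ) with ht
  have hApos : 0 < A := hpos (n + 1) (Nat.le_add_left 1 n)
  have htnn : 0 ≤ t := by positivity
  have ht2 : ((n + 1 : ℕ) : ℝ) ^ (-(2 * σ)) = t ^ 2 := by
    rw [ht, sq, ← Real.rpow_add (by positivity)]
    ring_nf
  rw [ht2]
  have hsub : (x ^ 2 / A + A * t ^ 2) / 2 - x * t = (x - A * t) ^ 2 / (2 * A) := by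
    field_simp
    ring
  nlinarith [sq_nonneg (x - A * t), div_nonneg (sq_nonneg (x - A * t)) (by linarith : (0:ℝ) ≤ 2 * A), hsub]

/-- Let `a` be positive with `σ_a(f) < ∞`. The supremum, over all
`b : ℕ → ℂ` with `∑_{n ≥ 1} |b n|²/a n < ∞`, of the abscissas of absolute convergence
`σ_a(∑ b n n^{-s})` equals `σ_a(f)/2` (expressed as `2 * sSup = σ_a(f)`). In particular,
for every `ε > 0` (when `σ_a(f)` is the real number `σf`), the choice
`b n = a n * n^{-(σf/2 + ε)}` satisfies `∑ |b n|²/a n < ∞` and yields a Dirichlet series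
with abscissa of absolute convergence `σf/2 - ε`. -/
theorem statement17 (a : ℕ → ℝ) (hpos : ∀ n : ℕ, 1 ≤ n → 0 < a n)
    (hfin : sigmaA a < ⊤) :
    2 * sSup {x : EReal | ∃ b : ℕ → ℂ,
        (Summable fun n : ℕ => ‖b (n + 1)‖ ^ 2 / a (n + 1)) ∧
        x = sigmaA (fun n => ‖b n‖)} = sigmaA a ∧
    ∀ ε : ℝ, 0 < ε → ∀ σf : ℝ, sigmaA a = (σf : EReal) →
      (Summable fun n : ℕ =>
        (a (n + 1) * ((n + 1 : ℕ) : ℝ) ^ (-(σf / 2 + ε))) ^ 2 / a (n + 1)) ∧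
      sigmaA (fun n => a n * (n : ℝ) ^ (-(σf / 2 + ε))) = ((σf / 2 - ε : ℝ) : EReal) := by
  have hanneg : ∀ n : ℕ, 0 ≤ a (n + 1) := fun n => (hpos (n + 1) (Nat.le_add_left 1 n)).le
  have part2 : ∀ ε : ℝ, 0 < ε → ∀ σf : ℝ, sigmaA a = (σf : EReal) →
      (Summable fun n : ℕ =>
        (a (n + 1) * ((n + 1 : ℕ) : ℝ) ^ (-(σf / 2 + ε))) ^ 2 / a (n + 1)) ∧
      sigmaA (fun n => a n * (n : ℝ) ^ (-(σf / 2 + ε))) = ((σf / 2 - ε : ℝ) : EReal) := by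
    intro ε hε σf hσf
    have hsum0 : (fun n : ℕ =>
        (a (n + 1) * ((n + 1 : ℕ) : ℝ) ^ (-(σf / 2 + ε))) ^ 2 / a (n + 1)) =
        fun n : ℕ => a (n + 1) * ((n + 1 : ℕ) : ℝ) ^ (-(σf + 2 * ε)) := by
      funext n
      have hApos : 0 < a (n + 1) := hpos (n + 1) (Nat.le_add_left 1 n)
      have hr2 : (((n + 1 : ℕ) : ℝ) ^ (-(σf / 2 + ε))) ^ 2 =
          ((n + 1 : ℕ) : ℝ) ^ (-(σf + 2 * ε)) := by
        rw [sq, ← Real.rpow_add (by positivity)]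
        ring_nf
      rw [mul_pow, hr2, sq]
      field_simp
    constructor
    · rw [hsum0]
      exact summable_of_sigmaA_lt a hanneg (by rw [hσf]; exact_mod_cast (by linarith : σf < σf + 2 * ε))
    · rw [sigmaA_shift a hanneg σf (σf / 2 + ε) hσf]
      congr 1
      ring
  rcases eq_or_ne (sigmaA a) ⊥ with hbot | hne
  · constructor
    · have hsup : sSup {x : EReal | ∃ b : ℕ → ℂ,
          (Summable fun n : ℕ => ‖b (n + 1)‖ ^ 2 / a (n + 1)) ∧
          x = sigmaA (fun n => ‖b n‖)} = ⊥ := by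
        rw [sSup_eq_bot]
        rintro x ⟨b, hb, rfl⟩
        have hle : ∀ σ : ℝ, sigmaA (fun n => ‖b n‖) ≤ (σ : EReal) := by
          intro σ
          refine sigmaA_le_of_summable _ (summable_cs a hpos b hb ?_)
          exact summable_of_sigmaA_lt a hanneg (by rw [hbot]; exact EReal.bot_lt_coe _)
        by_contra h'
        obtain ⟨r, hr1, hr2⟩ := EReal.exists_between_coe_real (bot_lt_iff_ne_bot.mpr h')
        exact absurd (lt_of_le_of_lt (hle r) hr2) (lt_irrefl _)
      rw [hsup, hbot]
      exact EReal.mul_bot_of_pos (by norm_num)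
    · intro ε hε σf hσf
      rw [hbot] at hσf
      exact absurd hσf (by simp)
  · have hA : sigmaA a = ((sigmaA a).toReal : EReal) :=
      (EReal.coe_toReal (ne_of_lt hfin) hne).symm
    set σf := (sigmaA a).toReal with hσfdef
    refine ⟨?_, part2⟩
    have hsup : sSup {x : EReal | ∃ b : ℕ → ℂ,
        (Summable fun n : ℕ => ‖b (n + 1)‖ ^ 2 / a (n + 1)) ∧
        x = sigmaA (fun n => ‖b n‖)} = ((σf / 2 : ℝ) : EReal) := by
      apply le_antisymm
      · refine sSup_le ?_
        rintro x ⟨b, hb, rfl⟩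
        refine EReal.le_coe_of_forall _ _ fun ε hε => ?_
        refine sigmaA_le_of_summable _ (summable_cs a hpos b hb ?_)
        have h2 : (2 * (σf / 2 + ε)) = σf + 2 * ε := by ring
        rw [h2]
        exact summable_of_sigmaA_lt a hanneg
          (by rw [hA]; exact_mod_cast (by linarith : σf < σf + 2 * ε))
      · refine EReal.coe_le_of_forall _ _ fun ε hε => ?_
        refine le_sSup ⟨fun n => ((a n * (n : ℝ) ^ (-(σf / 2 + ε)) : ℝ) : ℂ), ?_, ?_⟩
        · refine ((part2 ε hε σf hA).1).congr fun n => ?_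
          simp only [Complex.norm_real, Real.norm_eq_abs, sq_abs]
        · rw [sigmaA_congr (fun n => ‖((a n * (n : ℝ) ^ (-(σf / 2 + ε)) : ℝ) : ℂ)‖)
            (fun n => a n * (n : ℝ) ^ (-(σf / 2 + ε))) ?_]
          · exact ((part2 ε hε σf hA).2).symm
          · intro n
            have : 0 ≤ a (n + 1) * ((n + 1 : ℕ) : ℝ) ^ (-(σf / 2 + ε)) :=
              mul_nonneg (hanneg n) (by positivity)
            simp only [Complex.norm_real]
            exact abs_of_nonneg this
    rw [hsup, hA]
    rw [show ((2 : EReal)) = ((2 : ℝ) : EReal) by norm_cast, ← EReal.coe_mul]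
    congr 1
    ring
end
end
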